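/- arXiv:1303.4540 — 7 statements merged into one kernel-verified Lean document; each statement's English description precedes it below -/
import Mathlib

section
/- For integers 0 ≤ i, j with i + j ≤ n, and 0 < θ ≤ 1, the quantity ψ_n(m) := ∏_{k=m+1}^{n} (1 + (θ-1)/k)^{-1} satisfies ψ_n(n-i-j) ≥ ψ_n(n-i) · ψ_n(n-j). -/
open Finset

/-- `ψ_n(m) = ∏_{k=m+1}^{n} (1 + (θ-1)/k)^{-1}`. -/
noncomputable def psiProd (θ : ℝ) (n m : ℕ) : ℝ :=
  ∏ k ∈ Finset.Ioc m n, (1 + (θ - 1) / (k : ℝ))⁻¹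

theorem psiProd_supermult (θ : ℝ) (hθ0 : 0 < θ) (hθ1 : θ ≤ 1) (n i j : ℕ)
    (hij : i + j ≤ n) :
    psiProd θ n (n - i) * psiProd θ n (n - j) ≤ psiProd θ n (n - i - j) := by
  have hf : ∀ k : ℕ, 1 ≤ k → 0 < 1 + (θ - 1) / (k : ℝ) := by
    intro k hk
    have hk' : (1:ℝ) ≤ (k : ℝ) := by exact_mod_cast hk
    have hkpos : (0:ℝ) < (k : ℝ) := by linarith
    have heq : 1 + (θ - 1) / (k : ℝ) = ((k : ℝ) + (θ - 1)) / (k : ℝ) := by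
      field_simp
    rw [heq]
    exact div_pos (by linarith) hkpos
  have h1 : n - i - j ≤ n - i := by omega
  have h2 : n - i ≤ n := by omega
  have hsplit : psiProd θ n (n - i - j)
      = (∏ k ∈ Finset.Ioc (n - i - j) (n - i), (1 + (θ - 1) / (k : ℝ))⁻¹)
        * psiProd θ n (n - i) := by
    rw [psiProd, psiProd, Finset.prod_Ioc_consecutive _ h1 h2]
  rw [hsplit, mul_comm]
  have hpos : 0 ≤ psiProd θ n (n - i) := by
    apply Finset.prod_nonneg
    intro k hk
    have : 1 ≤ k := by
      have := (Finset.mem_Ioc.mp hk).1; omega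
    exact inv_nonneg.mpr (le_of_lt (hf k this))
  apply mul_le_mul_of_nonneg_right _ hpos
  -- psiProd θ n (n - j) ≤ ∏ over Ioc (n-i-j) (n-i)
  have hmap : psiProd θ n (n - j)
      = ∏ k ∈ Finset.Ioc (n - i - j) (n - i), (1 + (θ - 1) / ((k + i : ℕ) : ℝ))⁻¹ := by
    rw [psiProd]
    have : Finset.Ioc (n - j) n
        = Finset.map (addRightEmbedding i) (Finset.Ioc (n - i - j) (n - i)) := by
      rw [Finset.map_add_right_Ioc]
      congr 1 <;> omega
    rw [this, Finset.prod_map]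
    rfl
  rw [hmap]
  apply Finset.prod_le_prod
  · intro k hk
    have hk1 : 1 ≤ k + i := by
      have := (Finset.mem_Ioc.mp hk).1; omega
    exact inv_nonneg.mpr (le_of_lt (hf _ hk1))
  · intro k hk
    have hk1 : 1 ≤ k := by
      have := (Finset.mem_Ioc.mp hk).1; omega
    have hkpos : (0:ℝ) < (k : ℝ) := by exact_mod_cast hk1
    have hkipos : (0:ℝ) < ((k + i : ℕ) : ℝ) := by
      have : 1 ≤ k + i := by omega
      exact_mod_cast this
    apply inv_anti₀ (hf _ hk1)
    have : (θ - 1) / (k : ℝ) ≤ (θ - 1) / ((k + i : ℕ) : ℝ) := by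
      rw [div_le_div_iff₀ hkpos hkipos]
      have hle : (k : ℝ) ≤ ((k + i : ℕ) : ℝ) := by
        exact_mod_cast Nat.le_add_right k i
      nlinarith
    linarith
end

section
/- For θ ≥ 1/log 2, the map θ ↦ t_θ(1) := θ ∫_{1/2}^{1} (1-u)^{θ-1}/u du is (weakly) decreasing in θ. -/
open Real MeasureTheory Metric intervalIntegral

/-- auxiliary bound : x^e * (-log x) ≤ 1/b for 0 < x ≤ 1, 0 < b ≤ e -/
lemma aux_rpow_log_bound {x b e : ℝ} (hx0 : 0 < x) (hx1 : x ≤ 1) (hb : 0 < b) (he : b ≤ e) :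
    x ^ e * (-Real.log x) ≤ 1 / b := by
  have h1 : b * Real.log x⁻¹ ≤ x⁻¹ ^ b - 1 := by
    have := Real.log_le_sub_one_of_pos (Real.rpow_pos_of_pos (inv_pos.2 hx0) b)
    rwa [Real.log_rpow (inv_pos.2 hx0)] at this
  have h2 : -Real.log x ≤ x⁻¹ ^ b / b := by
    rw [← Real.log_inv]
    rw [le_div_iff₀ hb]
    nlinarith
  have hA : (0:ℝ) ≤ x ^ e := (Real.rpow_pos_of_pos hx0 e).le
  calc x ^ e * (-Real.log x) ≤ x ^ e * (x⁻¹ ^ b / b) := mul_le_mul_of_nonneg_left h2 hA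
    _ = x ^ (e - b) / b := by
        rw [Real.inv_rpow hx0.le, Real.rpow_sub hx0]
        ring
    _ ≤ 1 / b := by
        gcongr
        exact Real.rpow_le_one hx0.le hx1 (by linarith)

/-- the θ-derivative of the integrand -/
noncomputable def Gd (θ u : ℝ) : ℝ :=
  ((1 - u) ^ (θ - 1) + θ * ((1 - u) ^ (θ - 1) * Real.log (1 - u))) / u

lemma key (θ₀ : ℝ) (hθ : 1 < θ₀) :
    IntervalIntegrable (Gd θ₀) volume (1/2) 1 ∧
    HasDerivAt (fun θ : ℝ => ∫ u in (1/2:ℝ)..1, θ * ((1 - u) ^ (θ - 1) / u))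
      (∫ u in (1/2:ℝ)..1, Gd θ₀ u) θ₀ := by
  set ε : ℝ := (θ₀ - 1) / 4 with hεdef
  have hεpos : 0 < ε := by simp only [hεdef]; linarith
  have hmrpow : ∀ θ : ℝ, Measurable fun u : ℝ => (1 - u) ^ (θ - 1) := fun θ =>
    Measurable.pow (measurable_const.sub measurable_id) measurable_const
  have hmeasG : ∀ θ : ℝ, AEStronglyMeasurable (fun u => θ * ((1 - u) ^ (θ - 1) / u))
      (volume.restrict (Set.uIoc (1/2 : ℝ) 1)) := by
    intro θ
    exact (measurable_const.mul ((hmrpow θ).div measurable_id)).aestronglyMeasurable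
  have hmeasGd : AEStronglyMeasurable (Gd θ₀) (volume.restrict (Set.uIoc (1/2 : ℝ) 1)) := by
    apply Measurable.aestronglyMeasurable
    unfold Gd
    exact ((hmrpow θ₀).add (measurable_const.mul ((hmrpow θ₀).mul
      (Real.measurable_log.comp (measurable_const.sub measurable_id))))).div measurable_id
  have hint : IntervalIntegrable (fun u => θ₀ * ((1 - u) ^ (θ₀ - 1) / u)) volume (1/2) 1 := by
    apply ContinuousOn.intervalIntegrable
    apply ContinuousOn.mul continuousOn_const
    apply ContinuousOn.div
    · intro u _
      exact ((Real.continuousAt_rpow_const (1 - u) (θ₀ - 1)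
        (Or.inr (by linarith))).comp ((continuous_const.sub continuous_id).continuousAt)).continuousWithinAt
    · exact continuousOn_id
    · intro u hu
      rw [Set.uIcc_of_le (by norm_num : (1/2:ℝ) ≤ 1)] at hu
      have := hu.1
      intro h; rw [h] at this; norm_num at this
  -- the bound
  set C : ℝ := 2 * (1 + (θ₀ + ε) * (1 / (2 * ε))) with hCdef
  have hC0 : 0 ≤ C := by
    have : 0 ≤ (θ₀ + ε) * (1 / (2 * ε)) := by positivity
    simp only [hCdef]; linarith
  have hball : ∀ θ ∈ ball θ₀ ε, 1 < θ ∧ θ < θ₀ + ε ∧ 2 * ε ≤ θ - 1 := by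
    intro θ hθball
    rw [mem_ball, Real.dist_eq, abs_lt] at hθball
    refine ⟨?_, by linarith [hθball.2], ?_⟩
    · simp only [hεdef] at hθball ⊢; linarith
    · simp only [hεdef] at hθball ⊢; linarith
  have h_bound : ∀ᵐ t ∂(volume : Measure ℝ), t ∈ Set.uIoc (1/2:ℝ) 1 →
      ∀ θ ∈ ball θ₀ ε, ‖Gd θ t‖ ≤ C := by
    filter_upwards with t ht θ hθball
    rw [Set.uIoc_of_le (by norm_num : (1/2:ℝ) ≤ 1)] at ht
    obtain ⟨hθ1, hθub, hθeb⟩ := hball θ hθball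
    rcases eq_or_lt_of_le ht.2 with h1 | h1
    · -- t = 1
      have : Gd θ t = 0 := by
        rw [h1]
        simp [Gd, Real.zero_rpow (by linarith : θ - 1 ≠ 0)]
      rw [this]; simpa using hC0
    · -- t < 1
      have hx0 : 0 < 1 - t := by linarith
      have hx1 : 1 - t ≤ 1 := by linarith [ht.1]
      have hA1 : (1 - t) ^ (θ - 1) ≤ 1 :=
        Real.rpow_le_one hx0.le hx1 (by linarith)
      have hA0 : 0 ≤ (1 - t) ^ (θ - 1) := (Real.rpow_pos_of_pos hx0 _).le
      have hlog : (1 - t) ^ (θ - 1) * (-Real.log (1 - t)) ≤ 1 / (2 * ε) :=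
        aux_rpow_log_bound hx0 hx1 (by linarith) hθeb
      have ht0 : (0:ℝ) < t := by linarith [ht.1]
      have hnum : |(1 - t) ^ (θ - 1) + θ * ((1 - t) ^ (θ - 1) * Real.log (1 - t))|
          ≤ 1 + (θ₀ + ε) * (1 / (2 * ε)) := by
        have habs : |(1 - t) ^ (θ - 1) + θ * ((1 - t) ^ (θ - 1) * Real.log (1 - t))|
            ≤ |(1 - t) ^ (θ - 1)| + |θ * ((1 - t) ^ (θ - 1) * Real.log (1 - t))| :=
          abs_add_le _ _
        have h2 : |(1 - t) ^ (θ - 1)| = (1 - t) ^ (θ - 1) := abs_of_nonneg hA0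
        have h4 : |Real.log (1 - t)| = -Real.log (1 - t) :=
          abs_of_neg (Real.log_neg hx0 (by linarith [ht.1]))
        have h3 : |θ * ((1 - t) ^ (θ - 1) * Real.log (1 - t))|
            = θ * ((1 - t) ^ (θ - 1) * (-Real.log (1 - t))) := by
          rw [abs_mul, abs_mul, abs_of_nonneg (by linarith : (0:ℝ) ≤ θ), h2, h4]
        have h5 : θ * ((1 - t) ^ (θ - 1) * (-Real.log (1 - t)))
            ≤ (θ₀ + ε) * (1 / (2 * ε)) := by
          apply mul_le_mul (le_of_lt hθub) hlog _ (by linarith)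
          exact mul_nonneg hA0 (by
            have := Real.log_nonpos hx0.le hx1; linarith)
        rw [h2, h3] at habs
        calc |(1 - t) ^ (θ - 1) + θ * ((1 - t) ^ (θ - 1) * Real.log (1 - t))|
            ≤ (1 - t) ^ (θ - 1) + θ * ((1 - t) ^ (θ - 1) * (-Real.log (1 - t))) := habs
          _ ≤ 1 + (θ₀ + ε) * (1 / (2 * ε)) := by linarith
      have hGdnorm : ‖Gd θ t‖
          = |(1 - t) ^ (θ - 1) + θ * ((1 - t) ^ (θ - 1) * Real.log (1 - t))| / t := by
        rw [Real.norm_eq_abs]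
        unfold Gd
        rw [abs_div, abs_of_pos ht0]
      rw [hGdnorm, hCdef]
      rw [div_le_iff₀ ht0]
      have h2t : (1:ℝ) ≤ 2 * t := by linarith [ht.1]
      nlinarith [hnum, abs_nonneg ((1 - t) ^ (θ - 1) + θ * ((1 - t) ^ (θ - 1) * Real.log (1 - t)))]
  have h_diff : ∀ᵐ t ∂(volume : Measure ℝ), t ∈ Set.uIoc (1/2:ℝ) 1 →
      ∀ θ ∈ ball θ₀ ε, HasDerivAt (fun θ => θ * ((1 - t) ^ (θ - 1) / t)) (Gd θ t) θ := by
    filter_upwards with t ht θ hθball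
    rw [Set.uIoc_of_le (by norm_num : (1/2:ℝ) ≤ 1)] at ht
    obtain ⟨hθ1, hθub, _⟩ := hball θ hθball
    rcases eq_or_lt_of_le ht.2 with h1 | h1
    · -- t = 1 : the function is locally 0
      subst h1
      have hGd : Gd θ 1 = 0 := by
        simp [Gd, Real.zero_rpow (by linarith : θ - 1 ≠ 0)]
      rw [hGd]
      have heq : (fun θ : ℝ => θ * ((1 - 1) ^ (θ - 1) / 1)) =ᶠ[nhds θ] (fun _ => (0:ℝ)) := by
        filter_upwards [eventually_gt_nhds hθ1] with θ' hθ'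
        rw [sub_self, Real.zero_rpow (by linarith : θ' - 1 ≠ 0)]
        simp
      exact HasDerivAt.congr_of_eventuallyEq (hasDerivAt_const θ (0:ℝ)) heq
    · have hx0 : 0 < 1 - t := by linarith
      have h2 : HasDerivAt (fun θ : ℝ => (1 - t) ^ (θ - 1))
          ((1 - t) ^ (θ - 1) * Real.log (1 - t)) θ := by
        have h := ((Real.hasStrictDerivAt_const_rpow hx0 (θ - 1)).hasDerivAt).comp θ
          ((hasDerivAt_id θ).sub_const 1)
        simpa [Function.comp_def] using h
      have h3 := (hasDerivAt_id θ).mul (h2.div_const t)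
      have hval : Gd θ t
          = 1 * ((1 - t) ^ (θ - 1) / t) + θ * ((1 - t) ^ (θ - 1) * Real.log (1 - t) / t) := by
        unfold Gd; ring
      rw [hval]
      exact h3
  have := intervalIntegral.hasDerivAt_integral_of_dominated_loc_of_deriv_le (ball_mem_nhds θ₀ hεpos)
    (Filter.Eventually.of_forall hmeasG) hint hmeasGd h_bound
    (intervalIntegrable_const) h_diff
  exact this

theorem t_theta_one_antitoneOn :
    AntitoneOn (fun θ : ℝ => θ * ∫ u in (1/2 : ℝ)..1, (1 - u) ^ (θ - 1) / u)
      (Set.Ici (1 / Real.log 2)) := by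
  have hlog2 : 0 < Real.log 2 := Real.log_pos one_lt_two
  have hc1 : 1 < 1 / Real.log 2 := by
    rw [lt_div_iff₀ hlog2]
    nlinarith [Real.log_two_lt_d9]
  have hrepr : (fun θ : ℝ => θ * ∫ u in (1/2 : ℝ)..1, (1 - u) ^ (θ - 1) / u)
      = fun θ : ℝ => ∫ u in (1/2:ℝ)..1, θ * ((1 - u) ^ (θ - 1) / u) := by
    funext θ
    rw [intervalIntegral.integral_const_mul]
  rw [hrepr]
  apply antitoneOn_of_deriv_nonpos (convex_Ici _)
  · intro θ hθ
    have hθ1 : 1 < θ := lt_of_lt_of_le hc1 hθ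
    exact ((key θ hθ1).2.continuousAt).continuousWithinAt
  · rw [interior_Ici]
    intro θ hθ
    have hθ1 : 1 < θ := lt_trans hc1 hθ
    exact (key θ hθ1).2.differentiableAt.differentiableWithinAt
  · rw [interior_Ici]
    intro θ hθ
    rw [Set.mem_Ioi] at hθ
    have hθ1 : 1 < θ := lt_trans hc1 hθ
    have hθc : 1 ≤ θ * Real.log 2 := (div_le_iff₀ hlog2).mp hθ.le
    rw [(key θ hθ1).2.deriv]
    have hnonneg : 0 ≤ ∫ u in (1/2:ℝ)..1, -(Gd θ u) := by
      apply intervalIntegral.integral_nonneg (by norm_num)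
      intro u hu
      rw [neg_nonneg]
      rcases eq_or_lt_of_le hu.2 with h1 | h1
      · rw [h1]
        simp [Gd, Real.zero_rpow (by linarith : θ - 1 ≠ 0)]
      · have hx0 : 0 < 1 - u := by linarith
        have hA0 : 0 ≤ (1 - u) ^ (θ - 1) := (Real.rpow_pos_of_pos hx0 _).le
        have hu0 : (0:ℝ) < u := by linarith [hu.1]
        have hlogle : Real.log (1 - u) ≤ -Real.log 2 := by
          have h12 : (1:ℝ) - u ≤ 1/2 := by linarith [hu.1]
          have := Real.log_le_log hx0 h12
          rw [show (1:ℝ)/2 = 2⁻¹ by norm_num, Real.log_inv] at this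
          exact this
        have hfac : 1 + θ * Real.log (1 - u) ≤ 0 := by
          have hm : θ * Real.log (1 - u) ≤ θ * (-Real.log 2) :=
            mul_le_mul_of_nonneg_left hlogle (by linarith)
          nlinarith
        have hnum : (1 - u) ^ (θ - 1) + θ * ((1 - u) ^ (θ - 1) * Real.log (1 - u))
            = (1 - u) ^ (θ - 1) * (1 + θ * Real.log (1 - u)) := by ring
        unfold Gd
        rw [hnum]
        exact div_nonpos_of_nonpos_of_nonneg (mul_nonpos_of_nonneg_of_nonpos hA0 hfac) hu0.le
    rw [intervalIntegral.integral_neg] at hnonneg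
    linarith
end

section
/- Watterson's formula: Let ν_n be the Ewens measure with parameter θ > 0 on S_n. For (j_1,...,j_r) ∈ Z_+^r with 1 ≤ r ≤ n and l := 1·j_1 + 2·j_2 + ... + r·j_r, the expectation of ∏_{i=1}^r (k_i(σ))_{(j_i)} with respect to ν_n equals 1{l ≤ n} · ψ_n(n-l) · ∏_{i=1}^r (θ/i)^{j_i}, where (x)_{(m)} = x(x-1)···(x-m+1) is the falling factorial and ψ_n(m) = (n!/θ^{(n)}) · (θ^{(m)}/m!). -/
open Finset

noncomputable section

/-- Rising factorial `θ^{(n)} = θ(θ+1)⋯(θ+n-1)`. -/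
def risingFact (θ : ℝ) (n : ℕ) : ℝ := ∏ i ∈ Finset.range n, (θ + i)

/-- `k_j(σ)`: the number of cycles of length `j` in `σ` (fixed points count as 1-cycles). -/
def cycCount {n : ℕ} (σ : Equiv.Perm (Fin n)) (j : ℕ) : ℕ :=
  if j = 1 then n - σ.cycleType.sum else Multiset.count j σ.cycleType

/-- `w(σ)`: the total number of cycles of `σ`, including fixed points. -/
def numCyc {n : ℕ} (σ : Equiv.Perm (Fin n)) : ℕ :=
  Multiset.card σ.cycleType + (n - σ.cycleType.sum)

/-- Expectation with respect to the Ewens measure `ν_{n,θ}`. -/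
def ewensE (θ : ℝ) (n : ℕ) (g : Equiv.Perm (Fin n) → ℝ) : ℝ :=
  (∑ σ : Equiv.Perm (Fin n), θ ^ numCyc σ * g σ) / risingFact θ n

/-- Falling factorial `x(x-1)⋯(x-k+1)` of a real number. -/
def fallFact (x : ℝ) (k : ℕ) : ℝ := ∏ i ∈ Finset.range k, (x - i)

end

noncomputable def psiRF (θ : ℝ) (n m : ℕ) : ℝ :=
  ((Nat.factorial n : ℝ) / risingFact θ n) * (risingFact θ m / (Nat.factorial m : ℝ))

/- ### Auxiliary development -/

section Aux

open scoped Classical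

variable {α β : Type*} [Fintype α] [DecidableEq α] [Fintype β] [DecidableEq β]

open Equiv Equiv.Perm

/-- The full cycle type of a permutation, including fixed points as parts equal to 1. -/
noncomputable def ftyp (σ : Perm α) : Multiset ℕ :=
  σ.cycleType + Multiset.replicate (Fintype.card α - σ.cycleType.sum) 1

/-- A permutation acting with a single orbit. -/
def OneCyc (c : Perm β) : Prop := ∀ x y, c.SameCycle x y

/-- `s` is (the underlying set of) an orbit of `σ`. -/
def IsOrb (σ : Perm α) (s : Finset α) : Prop :=
  s.Nonempty ∧ (∀ x ∈ s, σ x ∈ s) ∧ ∀ x ∈ s, ∀ y ∈ s, σ.SameCycle x y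

lemma ftyp_card (σ : Perm α) :
    Multiset.card (ftyp σ) =
      Multiset.card σ.cycleType + (Fintype.card α - σ.cycleType.sum) := by
  simp [ftyp]

lemma ftyp_count_one (σ : Perm α) :
    Multiset.count 1 (ftyp σ) = Fintype.card α - σ.cycleType.sum := by
  have h0 : Multiset.count 1 σ.cycleType = 0 :=
    Multiset.count_eq_zero.2 (fun h => by
      have := Equiv.Perm.two_le_of_mem_cycleType h; omega)
  simp [ftyp, Multiset.count_replicate, h0]

lemma ftyp_count_of_two_le {i : ℕ} (hi : 2 ≤ i) (σ : Perm α) :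
    Multiset.count i (ftyp σ) = Multiset.count i σ.cycleType := by
  rw [ftyp, Multiset.count_add, Multiset.count_replicate,
    if_neg (by omega : ¬ (1:ℕ) = i), add_zero]

lemma ftyp_sum (σ : Perm α) : (ftyp σ).sum = Fintype.card α := by
  have hle : σ.cycleType.sum ≤ Fintype.card α := by
    rw [Equiv.Perm.sum_cycleType, ← Finset.card_univ]
    exact Finset.card_le_univ _
  simp only [ftyp, Multiset.sum_add, Multiset.sum_replicate, smul_eq_mul, mul_one]
  omega

lemma mem_ftyp_icc (σ : Perm α) {x : ℕ} (hx : x ∈ ftyp σ) :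
    x ∈ Finset.Icc 1 (Fintype.card α) := by
  have hle : σ.cycleType.sum ≤ Fintype.card α := by
    rw [Equiv.Perm.sum_cycleType, ← Finset.card_univ]
    exact Finset.card_le_univ _
  rcases Multiset.mem_add.1 hx with h | h
  · have h2 := Equiv.Perm.two_le_of_mem_cycleType h
    have h3 : x ≤ σ.cycleType.sum :=
      Multiset.single_le_sum (fun y _ => Nat.zero_le y) _ h
    simp only [Finset.mem_Icc]; omega
  · have h1 := Multiset.eq_of_mem_replicate h
    subst h1
    have : Fintype.card α - σ.cycleType.sum ≠ 0 := by
      intro h0; rw [h0] at h; simp at h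
    simp only [Finset.mem_Icc]; omega

lemma permCongr_pow (e : α ≃ β) (c : Perm α) (k : ℕ) :
    (e.permCongr c) ^ k = e.permCongr (c ^ k) := by
  induction k with
  | zero => ext x; simp
  | succ k ih =>
    ext x
    simp [pow_succ, ih, Equiv.permCongr_apply, Equiv.Perm.mul_apply]

lemma permCongr_zpow (e : α ≃ β) (c : Perm α) (k : ℤ) :
    (e.permCongr c) ^ k = e.permCongr (c ^ k) := by
  have hinv : ∀ d : Perm α, (e.permCongr d)⁻¹ = e.permCongr d⁻¹ := by
    intro d
    ext x
    apply (e.permCongr d).injective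
    rw [show (e.permCongr d) ((e.permCongr d)⁻¹ x) = x from (e.permCongr d).apply_symm_apply x]
    simp [Equiv.permCongr_apply]
  cases k with
  | ofNat k => simpa using permCongr_pow e c k
  | negSucc k =>
    rw [zpow_negSucc, zpow_negSucc, permCongr_pow, hinv]

lemma cycleType_permCongr (e : α ≃ β) (σ : Perm α) :
    (e.permCongr σ).cycleType = σ.cycleType := by
  have h : ∀ x : β, (fun _ : β => True) x := fun _ => trivial
  have he : e.permCongr σ = σ.extendDomain (e.trans (Equiv.subtypeUnivEquiv h).symm) := by
    ext b
    rw [Equiv.Perm.extendDomain_apply_subtype _ _ (h b)]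
    simp [Equiv.subtypeUnivEquiv]
  rw [he, Equiv.Perm.cycleType_extendDomain]

lemma ftyp_permCongr (e : α ≃ β) (σ : Perm α) :
    ftyp (e.permCongr σ) = ftyp σ := by
  unfold ftyp
  rw [cycleType_permCongr, Fintype.card_congr e]

lemma oneCyc_of_isCycle {c : Perm β} (hc : c.IsCycle) (hs : c.support = Finset.univ) :
    OneCyc c := by
  intro x y
  have hx : c x ≠ x := by
    rw [← Equiv.Perm.mem_support, hs]; exact Finset.mem_univ x
  have hy : c y ≠ y := by
    rw [← Equiv.Perm.mem_support, hs]; exact Finset.mem_univ y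
  exact hc.sameCycle hx hy

lemma oneCyc_isCycle {c : Perm β} (hc : OneCyc c) (h2 : 2 ≤ Fintype.card β) :
    c.IsCycle ∧ c.support = Finset.univ := by
  obtain ⟨a, b, hab⟩ := Fintype.exists_pair_of_one_lt_card (α := β) (by omega)
  have hex : ∃ x, c x ≠ x := by
    by_contra h
    push_neg at h
    obtain ⟨k, hk⟩ := hc a b
    rw [Equiv.Perm.zpow_apply_eq_self_of_apply_eq_self (h a)] at hk
    exact hab hk
  obtain ⟨x, hx⟩ := hex
  have hcyc : c.IsCycle := ⟨x, hx, fun y _ => (hc x y)⟩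
  refine ⟨hcyc, ?_⟩
  apply Finset.eq_univ_of_forall
  intro y
  rw [Equiv.Perm.mem_support]
  intro hy
  obtain ⟨k, hk⟩ := hc y x
  rw [Equiv.Perm.zpow_apply_eq_self_of_apply_eq_self hy] at hk
  subst hk; exact hx hy

lemma oneCyc_ftyp {c : Perm β} (hc : OneCyc c) (h1 : 1 ≤ Fintype.card β) :
    ftyp c = {Fintype.card β} := by
  rcases eq_or_lt_of_le h1 with h | h
  · have hcard : Fintype.card β = 1 := h.symm
    have hsub : Subsingleton β := Fintype.card_le_one_iff_subsingleton.1 (le_of_eq hcard)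
    have hc1 : c = 1 := by
      ext x
      exact Subsingleton.elim _ _
    subst hc1
    unfold ftyp
    rw [Equiv.Perm.cycleType_one, hcard]
    simp
  · obtain ⟨hcyc, hsupp⟩ := oneCyc_isCycle hc h
    have h2 : c.cycleType = {Fintype.card β} := by
      rw [hcyc.cycleType, hsupp, Finset.card_univ]
    have h3 : c.cycleType.sum = Fintype.card β := by rw [h2]; simp
    simp [ftyp, h2, h3]


lemma oneCyc_permCongr (e : α ≃ β) {c : Perm α} (hc : OneCyc c) :
    OneCyc (e.permCongr c) := by
  intro x y
  obtain ⟨k, hk⟩ := hc (e.symm x) (e.symm y)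
  refine ⟨k, ?_⟩
  rw [permCongr_zpow]
  simp only [Equiv.permCongr_apply, Equiv.symm_apply_apply, hk]
  exact e.apply_symm_apply y

lemma oneCyc_finRotate (m : ℕ) : OneCyc (finRotate (m+1)) := by
  rcases Nat.eq_zero_or_pos m with h0 | hpos
  · subst h0
    intro x y
    have : x = y := Fin.ext (by omega)
    subst this
    exact Equiv.Perm.SameCycle.refl _ _
  · exact oneCyc_of_isCycle (isCycle_finRotate_of_le (by omega))
      (support_finRotate_of_le (by omega))

lemma oneCyc_orderOf {c : Perm β} (hc : OneCyc c) (h1 : 1 ≤ Fintype.card β) :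
    orderOf c = Fintype.card β := by
  rcases eq_or_lt_of_le h1 with h | h
  · have hsub : Subsingleton β := Fintype.card_le_one_iff_subsingleton.1 (le_of_eq h.symm)
    have hc1 : c = 1 := by ext x; exact Subsingleton.elim _ _
    rw [hc1, orderOf_one, h]
  · obtain ⟨hcyc, hsupp⟩ := oneCyc_isCycle hc h
    rw [hcyc.orderOf, hsupp, Finset.card_univ]

lemma oneCyc_pow_inj {c : Perm β} (hc : OneCyc c) (h1 : 1 ≤ Fintype.card β) {x : β}
    {a b : ℕ} (ha : a < Fintype.card β) (hb : b < Fintype.card β)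
    (hab : (c ^ a) x = (c ^ b) x) : a = b := by
  -- wlog via an auxiliary claim
  have key : ∀ a b : ℕ, a ≤ b → b < Fintype.card β → (c ^ a) x = (c ^ b) x → a = b := by
    intro a b hab' hb' heq
    have hd : (c ^ (b - a)) x = x := by
      have h2 : (c ^ a) ((c ^ (b - a)) x) = (c ^ a) x := by
        rw [← Equiv.Perm.mul_apply, ← pow_add]
        rw [Nat.add_sub_cancel' hab']
        exact heq.symm
      exact (c ^ a).injective h2
    by_contra hne
    have hdpos : 0 < b - a := by omega
    have h2m : 2 ≤ Fintype.card β := by omega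
    obtain ⟨hcyc, hsupp⟩ := oneCyc_isCycle hc h2m
    have hx : c x ≠ x := by
      rw [← Equiv.Perm.mem_support, hsupp]; exact Finset.mem_univ x
    have hpow1 : c ^ (b - a) = 1 := (hcyc.pow_eq_one_iff).2 ⟨x, hx, hd⟩
    have := Nat.le_of_dvd hdpos (orderOf_dvd_of_pow_eq_one hpow1)
    rw [oneCyc_orderOf hc h1] at this
    omega
  rcases le_total a b with h | h
  · exact key a b h hb hab
  · exact (key b a h ha hab.symm).symm

open Fin.NatCast in
lemma card_oneCyc_aux (m' : ℕ) (hcard : Fintype.card β = m' + 1) :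
    (Finset.univ.filter (fun c : Perm β => OneCyc c)).card * (m' + 1)
      = (m'+1).factorial := by
  classical
  have h1 : 1 ≤ Fintype.card β := by omega
  -- the pointed set
  have hprod : ((Finset.univ.filter (fun c : Perm β => OneCyc c)) ×ˢ (Finset.univ : Finset β)).card
      = (Finset.univ.filter (fun c : Perm β => OneCyc c)).card * (m' + 1) := by
    rw [Finset.card_product, Finset.card_univ, hcard]
  rw [← hprod]
  -- bijection with equivalences Fin (m'+1) ≃ β
  have horder : ∀ c : Perm β, OneCyc c → orderOf c = m' + 1 := by
    intro c hc; rw [oneCyc_orderOf hc h1, hcard]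
  have hbij : ∀ (c : Perm β) (x : β), OneCyc c →
      Function.Bijective (fun k : Fin (m'+1) => (c ^ (k : ℕ)) x) := by
    intro c x hc
    refine (Fintype.bijective_iff_injective_and_card _).2 ⟨?_, by simp [hcard]⟩
    intro a b hab
    exact Fin.ext (oneCyc_pow_inj hc h1 (by rw [hcard]; exact a.isLt)
      (by rw [hcard]; exact b.isLt) (by simpa [hcard] using hab))
  have hpow0 : ∀ K : ℕ, ((finRotate (m'+1)) ^ K) 0 = (K : Fin (m'+1)) := by
    intro K
    induction K with
    | zero => simp
    | succ K ih =>
      rw [pow_succ', Equiv.Perm.mul_apply, ih, finRotate_succ_apply]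
      push_cast
      ring
  have hcount : (Finset.univ : Finset (Fin (m'+1) ≃ β)).card = (m'+1).factorial := by
    rw [Finset.card_univ, Fintype.card_equiv (Fintype.equivOfCardEq (by simp [hcard]))]
    simp
  rw [← hcount]
  have hmemS : ∀ p : Perm β × β,
      p ∈ (Finset.univ.filter (fun c : Perm β => OneCyc c)) ×ˢ (Finset.univ : Finset β) →
        OneCyc p.1 :=
    fun p hp => (Finset.mem_filter.1 (Finset.mem_product.1 hp).1).2
  refine Finset.card_bij'
    (fun p hp => Equiv.ofBijective _ (hbij p.1 p.2 (hmemS p hp)))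
    (fun e _ => (e.permCongr (finRotate (m'+1)), e 0))
    (fun p hp => Finset.mem_univ _) (fun e he => ?_) (fun p hp => ?_) (fun e he => ?_)
  · refine Finset.mem_product.2 ⟨Finset.mem_filter.2 ⟨Finset.mem_univ _, ?_⟩, Finset.mem_univ _⟩
    exact oneCyc_permCongr e (oneCyc_finRotate m')
  · -- left inverse : j (i p) = p
    obtain ⟨c, x⟩ := p
    have hc : OneCyc c := hmemS _ hp
    set E := Equiv.ofBijective _ (hbij c x hc) with hE
    have hEapp : ∀ k : Fin (m'+1), E k = (c ^ (k:ℕ)) x := fun k => rfl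
    refine Prod.ext ?_ ?_
    · show E.permCongr (finRotate (m'+1)) = c
      ext y
      have hy : E (E.symm y) = y := E.apply_symm_apply y
      set k := E.symm y with hk
      simp only [Equiv.permCongr_apply]
      rw [← hk]
      calc E (finRotate (m'+1) k)
          = (c ^ ((k + 1 : Fin (m'+1)) : ℕ)) x := by rw [finRotate_succ_apply]; exact hEapp _
        _ = (c ^ ((k:ℕ) + 1)) x := by
            have hval : ((k + 1 : Fin (m'+1)) : ℕ) = ((k:ℕ) + 1) % (m'+1) := by
              rw [Fin.val_add]
              simp [Fin.val_one', Nat.add_mod]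
            have hgen : ∀ K : ℕ, (c ^ (K % (m' + 1))) x = (c ^ K) x := by
              intro K
              conv_rhs => rw [← pow_mod_orderOf]
              rw [horder c hc]
            rw [hval]
            exact hgen _
        _ = c (E k) := by rw [pow_succ', Equiv.Perm.mul_apply]; rfl
        _ = c y := by rw [hy]
    · show E 0 = x
      rw [hEapp 0]
      simp
  · -- right inverse : i (j e) = e
    apply Equiv.ext
    intro k
    show ((e.permCongr (finRotate (m'+1))) ^ (k : ℕ)) (e 0) = e k
    rw [permCongr_pow]
    simp only [Equiv.permCongr_apply, Equiv.symm_apply_apply]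
    rw [hpow0, Fin.cast_val_eq_self]

/-- the number of single-orbit permutations of a finite type is `(m-1)!`. -/
lemma card_oneCyc (h1 : 1 ≤ Fintype.card β) :
    (Finset.univ.filter (fun c : Perm β => OneCyc c)).card
      = Nat.factorial (Fintype.card β - 1) := by
  obtain ⟨m', hm'⟩ : ∃ m', Fintype.card β = m' + 1 := ⟨Fintype.card β - 1, by omega⟩
  have h1 := card_oneCyc_aux m' hm'
  rw [hm']
  simp only [Nat.add_sub_cancel]
  have h4 : (Finset.univ.filter (fun c : Perm β => OneCyc c)).card * (m'+1)
      = m'.factorial * (m'+1) := by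
    rw [h1, Nat.factorial_succ]; ring
  exact Nat.eq_of_mul_eq_mul_right (by omega) h4

lemma ftyp_mul_ofSubtype (s : Finset α) (hs : s.Nonempty)
    {c : Perm {x // x ∈ s}} (hc : OneCyc c) (τ : Perm {x // ¬ x ∈ s}) :
    ftyp (Equiv.Perm.ofSubtype c * Equiv.Perm.ofSubtype τ) = ftyp τ + {s.card} := by
  classical
  have hcards : Fintype.card {x // x ∈ s} = s.card := Fintype.card_coe s
  have hcardc : Fintype.card {x // ¬ x ∈ s} = Fintype.card α - s.card := by
    rw [Fintype.card_subtype_compl, hcards]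
  have hsle : s.card ≤ Fintype.card α := by
    rw [← Finset.card_univ]; exact Finset.card_le_univ s
  have hdisj : (Equiv.Perm.ofSubtype c).Disjoint (Equiv.Perm.ofSubtype τ) := by
    intro x
    by_cases hx : x ∈ s
    · right; exact Equiv.Perm.ofSubtype_apply_of_not_mem τ (by simp [hx])
    · left; exact Equiv.Perm.ofSubtype_apply_of_not_mem c hx
  have hct : (Equiv.Perm.ofSubtype c * Equiv.Perm.ofSubtype τ).cycleType
      = c.cycleType + τ.cycleType := by
    rw [Equiv.Perm.Disjoint.cycleType_mul hdisj, Equiv.Perm.cycleType_ofSubtype, Equiv.Perm.cycleType_ofSubtype]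
  have hτs : τ.cycleType.sum ≤ Fintype.card α - s.card := by
    rw [Equiv.Perm.sum_cycleType, ← hcardc, ← Finset.card_univ]
    exact Finset.card_le_univ _
  have h1 : 1 ≤ s.card := Finset.card_pos.2 hs
  rcases eq_or_lt_of_le h1 with hm1 | hm2
  · -- s.card = 1
    have hsub : Subsingleton {x // x ∈ s} := by
      rw [← Fintype.card_le_one_iff_subsingleton, hcards, ← hm1]
    have hcc : c.cycleType = 0 := by
      have hc1 : c = 1 := by
        apply Equiv.ext
        intro x
        exact Subsingleton.elim (c x) x
      rw [hc1, Equiv.Perm.cycleType_one]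
    unfold ftyp
    rw [hct, hcc, hcardc, zero_add, ← hm1]
    have hrepl : Fintype.card α - τ.cycleType.sum
        = (Fintype.card α - 1 - τ.cycleType.sum) + 1 := by omega
    rw [hrepl, Multiset.replicate_succ, ← Multiset.singleton_add]
    have : ({1} : Multiset ℕ) + Multiset.replicate (Fintype.card α - 1 - τ.cycleType.sum) 1
        = Multiset.replicate (Fintype.card α - 1 - τ.cycleType.sum) 1 + {1} := add_comm _ _
    rw [this, ← add_assoc]
  · -- 2 ≤ s.card
    obtain ⟨hcyc, hsupp⟩ := oneCyc_isCycle hc (by rw [hcards]; omega)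
    have hcc : c.cycleType = {s.card} := by
      rw [hcyc.cycleType, hsupp, Finset.card_univ, hcards]
    unfold ftyp
    rw [hct, hcc, hcardc]
    have hsum : (({s.card} : Multiset ℕ) + τ.cycleType).sum = s.card + τ.cycleType.sum := by
      simp
    rw [hsum]
    have hsub2 : Fintype.card α - (s.card + τ.cycleType.sum)
        = Fintype.card α - s.card - τ.cycleType.sum := by omega
    rw [hsub2]
    have hgoal : ({s.card} : Multiset ℕ) + τ.cycleType
          + Multiset.replicate (Fintype.card α - s.card - τ.cycleType.sum) 1
        = τ.cycleType + Multiset.replicate (Fintype.card α - s.card - τ.cycleType.sum) 1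
          + {s.card} := by
      rw [add_comm ({s.card} : Multiset ℕ) τ.cycleType, add_right_comm]
    exact hgoal


lemma isOrb_mem_iff {σ : Perm α} {s : Finset α} (h : IsOrb σ s) :
    ∀ x, x ∈ s ↔ σ x ∈ s := by
  have himg : s.image σ = s := by
    apply Finset.eq_of_subset_of_card_le
    · intro y hy
      obtain ⟨x, hx, rfl⟩ := Finset.mem_image.1 hy
      exact h.2.1 x hx
    · rw [Finset.card_image_of_injective s σ.injective]
  intro x
  constructor
  · exact h.2.1 x
  · intro hx
    rw [← himg] at hx
    obtain ⟨y, hy, hyx⟩ := Finset.mem_image.1 hx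
    rwa [← σ.injective hyx]

lemma isOrb_zpow_mem {σ : Perm α} {s : Finset α} (h : IsOrb σ s) :
    ∀ k : ℤ, ∀ x ∈ s, (σ ^ k) x ∈ s := by
  have hiff := isOrb_mem_iff h
  intro k
  induction k using Int.induction_on with
  | zero => intro x hx; simpa using hx
  | succ k ih =>
    intro x hx
    have : (σ ^ ((k : ℤ) + 1)) x = (σ ^ (k : ℤ)) (σ x) := by
      rw [zpow_add_one, Equiv.Perm.mul_apply]
    rw [this]
    exact ih (σ x) ((hiff x).1 hx)
  | pred k ih =>
    intro x hx
    have : (σ ^ (-(k : ℤ) - 1)) x = (σ ^ (-(k:ℤ))) (σ⁻¹ x) := by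
      rw [sub_eq_add_neg, zpow_add, Equiv.Perm.mul_apply, zpow_neg_one]
    rw [this]
    apply ih
    have hx' : σ (σ⁻¹ x) ∈ s := by rwa [show σ (σ⁻¹ x) = x from σ.apply_symm_apply x]
    exact (hiff (σ⁻¹ x)).2 hx'

lemma sum_isOrb (s : Finset α) (hs : s.Nonempty) (H : Multiset ℕ → ℝ) :
    ∑ σ ∈ Finset.univ.filter (fun σ : Perm α => IsOrb σ s), H (ftyp σ)
      = (Nat.factorial (s.card - 1) : ℝ) * ∑ τ : Perm {x // ¬ x ∈ s}, H (ftyp τ + {s.card}) := by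
  classical
  have hcard1 : 1 ≤ Fintype.card {x // x ∈ s} := by
    rw [Fintype.card_coe]
    exact Finset.card_pos.2 hs
  have hmemiff : ∀ σ : Perm α, IsOrb σ s → ∀ x, x ∈ s ↔ σ x ∈ s :=
    fun σ h => isOrb_mem_iff h
  -- applying the recombined permutation
  have hgapp : ∀ (c : Perm {x // x ∈ s}) (τ : Perm {x // ¬ x ∈ s}) (x : α) (hx : x ∈ s),
      (Equiv.Perm.ofSubtype c * Equiv.Perm.ofSubtype τ) x = ↑(c ⟨x, hx⟩) := by
    intro c τ x hx
    rw [Equiv.Perm.mul_apply, Equiv.Perm.ofSubtype_apply_of_not_mem τ (by simp [hx]),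
      Equiv.Perm.ofSubtype_apply_of_mem c hx]
  have hgapp' : ∀ (c : Perm {x // x ∈ s}) (τ : Perm {x // ¬ x ∈ s}) (x : α) (hx : ¬ x ∈ s),
      (Equiv.Perm.ofSubtype c * Equiv.Perm.ofSubtype τ) x = ↑(τ ⟨x, hx⟩) := by
    intro c τ x hx
    rw [Equiv.Perm.mul_apply, Equiv.Perm.ofSubtype_apply_of_mem τ hx,
      Equiv.Perm.ofSubtype_apply_of_not_mem c (τ ⟨x, hx⟩).2]
  have hgzpow : ∀ (c : Perm {x // x ∈ s}) (τ : Perm {x // ¬ x ∈ s}) (k : ℤ) (x : α) (hx : x ∈ s),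
      ((Equiv.Perm.ofSubtype c * Equiv.Perm.ofSubtype τ) ^ k) x = ↑((c ^ k) ⟨x, hx⟩) := by
    intro c τ k x hx
    have hdisj : (Equiv.Perm.ofSubtype c).Disjoint (Equiv.Perm.ofSubtype τ) := by
      intro z
      by_cases hz : z ∈ s
      · right; exact Equiv.Perm.ofSubtype_apply_of_not_mem τ (by simp [hz])
      · left; exact Equiv.Perm.ofSubtype_apply_of_not_mem c hz
    rw [(Equiv.Perm.Disjoint.commute hdisj).mul_zpow, ← map_zpow Equiv.Perm.ofSubtype τ k,
      ← map_zpow Equiv.Perm.ofSubtype c k, Equiv.Perm.mul_apply,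
      Equiv.Perm.ofSubtype_apply_of_not_mem (τ ^ k) (by simp [hx]),
      Equiv.Perm.ofSubtype_apply_of_mem (c ^ k) hx]
  -- the recomposition is in the orbit set
  have hIsOrb_g : ∀ (c : Perm {x // x ∈ s}) (τ : Perm {x // ¬ x ∈ s}), OneCyc c →
      IsOrb (Equiv.Perm.ofSubtype c * Equiv.Perm.ofSubtype τ) s := by
    intro c τ hc
    refine ⟨hs, ?_, ?_⟩
    · intro x hx
      rw [hgapp c τ x hx]
      exact (c ⟨x, hx⟩).2
    · intro x hx y hy
      obtain ⟨k, hk⟩ := hc ⟨x, hx⟩ ⟨y, hy⟩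
      exact ⟨k, by rw [hgzpow c τ k x hx, hk]⟩
  -- the subtypePerm of an orbit permutation is a single cycle
  have honec : ∀ (σ : Perm α) (h : IsOrb σ s), OneCyc (σ.subtypePerm (fun x => (hmemiff σ h x).symm)) := by
    intro σ h x y
    obtain ⟨k, hk⟩ := h.2.2 x.1 x.2 y.1 y.2
    refine ⟨k, ?_⟩
    rw [Equiv.Perm.subtypePerm_zpow]
    exact Subtype.ext hk
  have hstep : ∑ σ ∈ Finset.univ.filter (fun σ : Perm α => IsOrb σ s), H (ftyp σ)
      = ∑ p ∈ (Finset.univ.filter (fun c : Perm {x // x ∈ s} => OneCyc c))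
            ×ˢ (Finset.univ : Finset (Perm {x // ¬ x ∈ s})),
          H (ftyp p.2 + {s.card}) := by
    refine Finset.sum_bij'
      (fun σ hσ => (σ.subtypePerm (fun x => (hmemiff σ (Finset.mem_filter.1 hσ).2 x).symm),
        σ.subtypePerm (fun x => (not_congr (hmemiff σ (Finset.mem_filter.1 hσ).2 x)).symm)))
      (fun p _ => Equiv.Perm.ofSubtype p.1 * Equiv.Perm.ofSubtype p.2)
      ?_ ?_ ?_ ?_ ?_
    · intro σ hσ
      refine Finset.mem_product.2 ⟨Finset.mem_filter.2 ⟨Finset.mem_univ _, ?_⟩, Finset.mem_univ _⟩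
      exact honec σ (Finset.mem_filter.1 hσ).2
    · intro p hp
      refine Finset.mem_filter.2 ⟨Finset.mem_univ _, ?_⟩
      exact hIsOrb_g p.1 p.2 (Finset.mem_filter.1 (Finset.mem_product.1 hp).1).2
    · -- j (i σ) = σ
      intro σ hσ
      ext x
      by_cases hx : x ∈ s
      · rw [hgapp _ _ x hx]
        rfl
      · rw [hgapp' _ _ x hx]
        rfl
    · -- i (j p) = p
      rintro ⟨c, τ⟩ hp
      refine Prod.ext ?_ ?_
      · apply Equiv.ext
        rintro ⟨x, hx⟩
        apply Subtype.ext
        show (Equiv.Perm.ofSubtype c * Equiv.Perm.ofSubtype τ) x = ↑(c ⟨x, hx⟩)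
        exact hgapp c τ x hx
      · apply Equiv.ext
        rintro ⟨x, hx⟩
        apply Subtype.ext
        show (Equiv.Perm.ofSubtype c * Equiv.Perm.ofSubtype τ) x = ↑(τ ⟨x, hx⟩)
        exact hgapp' c τ x hx
    · -- value equality
      intro σ hσ
      have h := (Finset.mem_filter.1 hσ).2
      have hrec : Equiv.Perm.ofSubtype (σ.subtypePerm (fun x => (hmemiff σ h x).symm))
          * Equiv.Perm.ofSubtype (σ.subtypePerm (p := fun y => ¬ y ∈ s) (fun x => (not_congr (hmemiff σ h x)).symm)) = σ := by
        ext x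
        by_cases hx : x ∈ s
        · rw [hgapp _ _ x hx]; rfl
        · rw [hgapp' _ _ x hx]; rfl
      have hft : ftyp σ = ftyp (σ.subtypePerm (p := fun y => ¬ y ∈ s) (fun x => (not_congr (hmemiff σ h x)).symm)) + {s.card} := by
        conv_lhs => rw [← hrec]
        exact ftyp_mul_ofSubtype s hs (honec σ h) _
      rw [hft]
  rw [hstep, Finset.sum_product]
  rw [Finset.sum_congr rfl (fun c _ => rfl)]
  rw [Finset.sum_const (b := ∑ τ : Perm {x // ¬ x ∈ s}, H (ftyp τ + {s.card}))]
  rw [card_oneCyc hcard1, Fintype.card_coe]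
  rw [nsmul_eq_mul]

lemma count_ftyp_eq_card_orb (σ : Perm α) {i : ℕ} (hi : 1 ≤ i) :
    Multiset.count i (ftyp σ)
      = (Finset.univ.filter (fun s : Finset α => IsOrb σ s ∧ s.card = i)).card := by
  classical
  rcases eq_or_lt_of_le hi with h1 | h2
  · -- i = 1 : fixed points
    have h1' : i = 1 := h1.symm
    subst h1'
    rw [ftyp_count_one, Equiv.Perm.sum_cycleType]
    have hset : Finset.univ.filter (fun s : Finset α => IsOrb σ s ∧ s.card = 1)
        = (Finset.univ.filter (fun a : α => σ a = a)).image (fun a => {a}) := by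
      ext t
      simp only [Finset.mem_filter, Finset.mem_univ, true_and, Finset.mem_image]
      constructor
      · rintro ⟨horb, hcard⟩
        obtain ⟨a, rfl⟩ := Finset.card_eq_one.1 hcard
        refine ⟨a, ?_, rfl⟩
        have := horb.2.1 a (Finset.mem_singleton_self a)
        simpa using this
      · rintro ⟨a, ha, rfl⟩
        refine ⟨⟨⟨a, Finset.mem_singleton_self a⟩, ?_, ?_⟩, Finset.card_singleton a⟩
        · intro x hx
          rw [Finset.mem_singleton] at hx
          subst hx
          rw [ha]
          exact Finset.mem_singleton_self x
        · intro x hx y hy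
          rw [Finset.mem_singleton] at hx hy
          subst hx; subst hy
          exact Equiv.Perm.SameCycle.refl σ _
    rw [hset, Finset.card_image_of_injective _ (fun a b hab => by simpa using hab)]
    have hfix : (Finset.univ.filter (fun a : α => σ a = a)) = (σ.support)ᶜ := by
      ext a
      simp [Equiv.Perm.mem_support]
    rw [hfix, Finset.card_compl]
  · -- 2 ≤ i : proper cycles
    have h2' : 2 ≤ i := h2
    rw [ftyp_count_of_two_le h2']
    have hcount : Multiset.count i σ.cycleType
        = (σ.cycleFactorsFinset.filter (fun c => i = c.support.card)).card := by
      rw [Equiv.Perm.cycleType_def, Multiset.count_map]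
      rfl
    rw [hcount]
    apply Finset.card_bij (fun c _ => Equiv.Perm.support c)
    · -- maps into the target
      intro c hcmem
      obtain ⟨hc, hcard⟩ := Finset.mem_filter.1 hcmem
      obtain ⟨hcyc, hfc⟩ := Equiv.Perm.mem_cycleFactorsFinset_iff.1 hc
      refine Finset.mem_filter.2 ⟨Finset.mem_univ _, ⟨?_, ?_, ?_⟩, hcard.symm⟩
      · rw [← Finset.card_pos, ← hcard]; omega
      · intro x hx
        rw [← hfc x hx]
        exact Equiv.Perm.apply_mem_support.2 hx
      · intro x hx y hy
        have hxc : c = σ.cycleOf x := Equiv.Perm.cycle_is_cycleOf hx hc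
        have hy' : y ∈ (σ.cycleOf x).support := by rwa [← hxc]
        exact (Equiv.Perm.mem_support_cycleOf_iff.1 hy').1
    · -- injective
      intro c1 hc1 c2 hc2 hsupp
      by_contra hne
      have hd := (Equiv.Perm.cycleFactorsFinset_pairwise_disjoint σ)
        (Finset.mem_coe.2 (Finset.mem_filter.1 hc1).1)
        (Finset.mem_coe.2 (Finset.mem_filter.1 hc2).1) hne
      have hds := hd.disjoint_support
      rw [hsupp, disjoint_self] at hds
      have hcard := (Finset.mem_filter.1 hc2).2
      rw [hds] at hcard
      simp at hcard
      omega
    · -- surjective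
      intro t ht
      obtain ⟨-, horb, hcard⟩ := Finset.mem_filter.1 ht
      obtain ⟨a, ha⟩ := horb.1
      have haσ : σ a ≠ a := by
        intro hfix
        have hsub : t ⊆ {a} := by
          intro y hy
          obtain ⟨k, hk⟩ := horb.2.2 a ha y hy
          rw [Equiv.Perm.zpow_apply_eq_self_of_apply_eq_self hfix] at hk
          rw [Finset.mem_singleton, ← hk]
        have := Finset.card_le_card hsub
        rw [Finset.card_singleton] at this
        omega
      have hcmem : σ.cycleOf a ∈ σ.cycleFactorsFinset :=
        Equiv.Perm.cycleOf_mem_cycleFactorsFinset_iff.2 (Equiv.Perm.mem_support.2 haσ)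
      have hsupp : (σ.cycleOf a).support = t := by
        ext y
        rw [Equiv.Perm.mem_support_cycleOf_iff]
        constructor
        · rintro ⟨⟨k, hk⟩, -⟩
          rw [← hk]
          exact isOrb_zpow_mem horb k a ha
        · intro hy
          exact ⟨horb.2.2 a ha y hy, Equiv.Perm.mem_support.2 haσ⟩
      exact ⟨σ.cycleOf a, Finset.mem_filter.2 ⟨hcmem, by rw [hsupp, hcard]⟩, hsupp⟩

lemma deletion (H : Multiset ℕ → ℝ) {i0 : ℕ} (h1 : 1 ≤ i0) (n : ℕ) :
    ∑ σ : Perm (Fin n), (Multiset.count i0 (ftyp σ) : ℝ) * H (ftyp σ)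
      = (n.choose i0 : ℝ) * (Nat.factorial (i0 - 1) : ℝ)
          * ∑ τ : Perm (Fin (n - i0)), H (ftyp τ + {i0}) := by
  classical
  have hexp : ∀ σ : Perm (Fin n),
      (Multiset.count i0 (ftyp σ) : ℝ) * H (ftyp σ)
        = ∑ s ∈ Finset.univ.filter (fun s : Finset (Fin n) => IsOrb σ s ∧ s.card = i0),
            H (ftyp σ) := by
    intro σ
    rw [Finset.sum_const, count_ftyp_eq_card_orb σ h1, nsmul_eq_mul]
  rw [Finset.sum_congr rfl (fun σ _ => hexp σ)]
  have hcond : ∀ (σ : Perm (Fin n)) (t : Finset (Fin n)),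
      σ ∈ (Finset.univ : Finset (Perm (Fin n)))
          ∧ t ∈ Finset.univ.filter (fun s : Finset (Fin n) => IsOrb σ s ∧ s.card = i0)
        ↔ σ ∈ Finset.univ.filter (fun σ : Perm (Fin n) => IsOrb σ t)
          ∧ t ∈ Finset.univ.filter (fun s : Finset (Fin n) => s.card = i0) := by
    intro σ t
    simp only [Finset.mem_univ, Finset.mem_filter, true_and]
    try tauto
  rw [Finset.sum_comm' hcond]
  have hs_inner : ∀ s ∈ Finset.univ.filter (fun s : Finset (Fin n) => s.card = i0),
      ∑ σ ∈ Finset.univ.filter (fun σ : Perm (Fin n) => IsOrb σ s), H (ftyp σ)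
        = ((i0 - 1).factorial : ℝ) * ∑ τ : Perm (Fin (n - i0)), H (ftyp τ + {i0}) := by
    intro s hsmem
    have hcard : s.card = i0 := (Finset.mem_filter.1 hsmem).2
    have hne : s.Nonempty := Finset.card_pos.1 (by omega)
    rw [sum_isOrb s hne H, hcard]
    congr 1
    have hcc : Fintype.card {x : Fin n // ¬ x ∈ s} = n - i0 := by
      rw [Fintype.card_subtype_compl, Fintype.card_coe, Fintype.card_fin, hcard]
    have e := Fintype.equivFinOfCardEq hcc
    apply Fintype.sum_equiv (e.permCongr)
    intro τ
    rw [ftyp_permCongr]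
  rw [Finset.sum_congr rfl hs_inner, Finset.sum_const, nsmul_eq_mul]
  have hPset : Finset.univ.filter (fun s : Finset (Fin n) => s.card = i0)
      = Finset.powersetCard i0 (Finset.univ : Finset (Fin n)) := by
    ext t
    simp [Finset.mem_powersetCard, Finset.subset_univ]
  have hP : (Finset.univ.filter (fun s : Finset (Fin n) => s.card = i0)).card = n.choose i0 := by
    rw [hPset, Finset.card_powersetCard, Finset.card_univ, Fintype.card_fin]
  rw [hP]
  ring


lemma risingFact_succ (θ : ℝ) (n : ℕ) : risingFact θ (n+1) = risingFact θ n * (θ + n) :=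
  Finset.prod_range_succ _ _

lemma risingFact_pos {θ : ℝ} (hθ : 0 < θ) (n : ℕ) : 0 < risingFact θ n := by
  apply Finset.prod_pos
  intro i _
  positivity

lemma descFactorial_succ' (c k : ℕ) :
    c.descFactorial (k+1) = c * ((c-1).descFactorial k) := by
  cases c with
  | zero => simp
  | succ c => rw [Nat.succ_descFactorial_succ]; simp

lemma rf_rec_range (θ : ℝ) (n : ℕ) :
    (n : ℝ) * risingFact θ n
      = ∑ k ∈ Finset.range n, (n.descFactorial (k+1) : ℝ) * (θ * risingFact θ (n - (k+1))) := by
  induction n with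
  | zero => simp
  | succ n ih =>
    have h1 : ∀ k, (((n+1).descFactorial (k+1) : ℕ) : ℝ) = ((n:ℝ)+1) * (n.descFactorial k : ℝ) := by
      intro k; rw [Nat.succ_descFactorial_succ]; push_cast; ring
    rw [Finset.sum_range_succ']
    simp only [h1, Nat.succ_sub_succ, Nat.descFactorial_zero, Nat.cast_one, Nat.sub_zero]
    have h2 : ∑ i ∈ Finset.range n,
        ((n:ℝ)+1) * (n.descFactorial (i+1) : ℝ) * (θ * risingFact θ (n - (i+1)))
        = ((n:ℝ)+1) * ((n:ℝ) * risingFact θ n) := by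
      rw [ih, Finset.mul_sum]
      exact Finset.sum_congr rfl fun i _ => by ring
    rw [h2, risingFact_succ]
    push_cast
    ring

lemma sum_Icc_one (f : ℕ → ℝ) (n : ℕ) :
    ∑ i ∈ Finset.Icc 1 n, f i = ∑ k ∈ Finset.range n, f (k+1) := by
  rw [← Finset.Ico_add_one_right_eq_Icc, Finset.sum_Ico_eq_sum_range]
  simp [Nat.add_comm]

lemma risingFact_rec (θ : ℝ) (n : ℕ) :
    (n : ℝ) * risingFact θ n
      = ∑ i0 ∈ Finset.Icc 1 n, (i0 : ℝ) * ((n.choose i0 : ℝ) * ((i0 - 1).factorial : ℝ))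
          * (θ * risingFact θ (n - i0)) := by
  have hconv : ∀ i0 ∈ Finset.Icc 1 n,
      (i0 : ℝ) * ((n.choose i0 : ℝ) * ((i0 - 1).factorial : ℝ)) * (θ * risingFact θ (n - i0))
        = (n.descFactorial i0 : ℝ) * (θ * risingFact θ (n - i0)) := by
    intro i0 hi0
    have h1 : 1 ≤ i0 := (Finset.mem_Icc.1 hi0).1
    have h2 : (n.descFactorial i0 : ℕ) = i0 * ((i0-1).factorial * n.choose i0) := by
      rw [Nat.descFactorial_eq_factorial_mul_choose, ← Nat.mul_factorial_pred (by omega), Nat.mul_assoc]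
    rw [h2]
    push_cast
    ring
  rw [Finset.sum_congr rfl hconv, sum_Icc_one]
  exact rf_rec_range θ n

lemma sum_theta_pow (θ : ℝ) : ∀ n : ℕ,
    ∑ σ : Perm (Fin n), θ ^ (Multiset.card (ftyp σ)) = risingFact θ n := by
  intro n
  induction n using Nat.strong_induction_on with
  | _ n ih =>
  rcases Nat.eq_zero_or_pos n with h0 | hpos
  · subst h0
    have h1 : ∀ σ : Perm (Fin 0), θ ^ (Multiset.card (ftyp σ)) = 1 := by
      intro σ
      have hσ : σ = 1 := by ext x; exact x.elim0
      subst hσ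
      simp [ftyp, Equiv.Perm.cycleType_one]
    rw [Finset.sum_congr rfl (fun σ _ => h1 σ)]
    simp [risingFact, Finset.card_univ]
  · -- n ≥ 1
    have hcount : ∀ σ : Perm (Fin n),
        (n : ℝ) = ∑ i0 ∈ Finset.Icc 1 n, (i0 : ℝ) * (Multiset.count i0 (ftyp σ) : ℝ) := by
      intro σ
      have hs : (ftyp σ).sum = n := by rw [ftyp_sum, Fintype.card_fin]
      have h2 : (ftyp σ).sum = ∑ m ∈ (ftyp σ).toFinset, Multiset.count m (ftyp σ) • m := by
        conv_lhs => rw [← Multiset.map_id (ftyp σ)]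
        rw [Finset.sum_multiset_map_count]
        rfl
      have h3 : ∑ m ∈ (ftyp σ).toFinset, Multiset.count m (ftyp σ) • m
          = ∑ i0 ∈ Finset.Icc 1 n, Multiset.count i0 (ftyp σ) • i0 := by
        apply Finset.sum_subset
        · intro x hx
          have := mem_ftyp_icc σ (Multiset.mem_toFinset.1 hx)
          rwa [Fintype.card_fin] at this
        · intro x _ hx
          rw [Multiset.count_eq_zero_of_notMem (fun hm => hx (Multiset.mem_toFinset.2 hm))]
          simp
      have h4 : (n : ℕ) = ∑ i0 ∈ Finset.Icc 1 n, Multiset.count i0 (ftyp σ) * i0 := by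
        calc (n : ℕ) = (ftyp σ).sum := hs.symm
          _ = ∑ m ∈ (ftyp σ).toFinset, Multiset.count m (ftyp σ) • m := h2
          _ = ∑ i0 ∈ Finset.Icc 1 n, Multiset.count i0 (ftyp σ) • i0 := h3
          _ = ∑ i0 ∈ Finset.Icc 1 n, Multiset.count i0 (ftyp σ) * i0 := by
              simp [smul_eq_mul]
      have h5 : (n : ℝ) = ((∑ i0 ∈ Finset.Icc 1 n, Multiset.count i0 (ftyp σ) * i0 : ℕ) : ℝ) := by
        exact_mod_cast congrArg (fun m : ℕ => (m : ℝ)) h4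
      rw [h5]
      push_cast
      apply Finset.sum_congr rfl
      intro i0 _
      ring
    have key : (n : ℝ) * (∑ σ : Perm (Fin n), θ ^ (Multiset.card (ftyp σ)))
        = ∑ i0 ∈ Finset.Icc 1 n, (i0 : ℝ)
            * ∑ σ : Perm (Fin n), (Multiset.count i0 (ftyp σ) : ℝ) * θ ^ (Multiset.card (ftyp σ)) := by
      rw [Finset.mul_sum]
      have hstep : ∀ σ : Perm (Fin n), (n:ℝ) * θ ^ (Multiset.card (ftyp σ))
          = ∑ i0 ∈ Finset.Icc 1 n,
              (i0:ℝ) * ((Multiset.count i0 (ftyp σ) : ℝ) * θ ^ (Multiset.card (ftyp σ))) := by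
        intro σ
        rw [hcount σ, Finset.sum_mul]
        exact Finset.sum_congr rfl (fun i0 _ => by ring)
      rw [Finset.sum_congr rfl (fun σ _ => hstep σ), Finset.sum_comm]
      exact Finset.sum_congr rfl (fun i0 _ => by rw [Finset.mul_sum])
    have key2 : (n : ℝ) * (∑ σ : Perm (Fin n), θ ^ (Multiset.card (ftyp σ)))
        = ∑ i0 ∈ Finset.Icc 1 n, (i0 : ℝ) * ((n.choose i0 : ℝ) * ((i0 - 1).factorial : ℝ))
            * (θ * risingFact θ (n - i0)) := by
      rw [key]
      apply Finset.sum_congr rfl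
      intro i0 hi0
      have h1 : 1 ≤ i0 := (Finset.mem_Icc.1 hi0).1
      rw [deletion (fun μ => θ ^ (Multiset.card μ)) h1 n]
      have h2 : ∀ τ : Perm (Fin (n - i0)),
          θ ^ (Multiset.card (ftyp τ + {i0})) = θ * θ ^ (Multiset.card (ftyp τ)) := by
        intro τ
        rw [Multiset.card_add, Multiset.card_singleton, pow_succ]
        ring
      rw [Finset.sum_congr rfl (fun τ _ => h2 τ), ← Finset.mul_sum,
        ih (n - i0) (Nat.sub_lt hpos (by omega))]
      ring
    have hne : (n : ℝ) ≠ 0 := Nat.cast_ne_zero.2 (by omega)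
    exact mul_left_cancel₀ hne (key2.trans (risingFact_rec θ n).symm)

lemma main_calc (θ : ℝ) : ∀ N n r : ℕ, ∀ j : ℕ → ℕ, (∑ i ∈ Finset.Icc 1 r, j i = N) →
    ∑ σ : Perm (Fin n), θ ^ (Multiset.card (ftyp σ))
        * ∏ i ∈ Finset.Icc 1 r, ((Multiset.count i (ftyp σ)).descFactorial (j i) : ℝ)
      = (n.descFactorial (∑ i ∈ Finset.Icc 1 r, i * j i) : ℝ)
          * risingFact θ (n - (∑ i ∈ Finset.Icc 1 r, i * j i))
          * ∏ i ∈ Finset.Icc 1 r, (θ / i) ^ (j i) := by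
  intro N
  induction N with
  | zero =>
    intro n r j hj
    have hz : ∀ i ∈ Finset.Icc 1 r, j i = 0 := by
      intro i hi
      by_contra h
      have h1 : 0 < ∑ i ∈ Finset.Icc 1 r, j i :=
        Finset.sum_pos' (fun i _ => Nat.zero_le _) ⟨i, hi, by omega⟩
      omega
    have hl : ∑ i ∈ Finset.Icc 1 r, i * j i = 0 :=
      Finset.sum_eq_zero (fun i hi => by rw [hz i hi, Nat.mul_zero])
    have hprod1 : ∀ σ : Perm (Fin n),
        (∏ i ∈ Finset.Icc 1 r, ((Multiset.count i (ftyp σ)).descFactorial (j i) : ℝ)) = 1 :=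
      fun σ => Finset.prod_eq_one (fun i hi => by rw [hz i hi, Nat.descFactorial_zero, Nat.cast_one])
    have hprod2 : (∏ i ∈ Finset.Icc 1 r, (θ / i) ^ (j i)) = 1 :=
      Finset.prod_eq_one (fun i hi => by rw [hz i hi, pow_zero])
    rw [hl, hprod2]
    simp only [Nat.descFactorial_zero, Nat.cast_one, Nat.sub_zero, one_mul, mul_one]
    rw [Finset.sum_congr rfl (fun σ _ => by rw [hprod1 σ, mul_one])]
    exact sum_theta_pow θ n
  | succ N ihN =>
    intro n r j hj
    have hex : ∃ i0 ∈ Finset.Icc 1 r, j i0 ≠ 0 := by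
      by_contra h
      push_neg at h
      have := Finset.sum_eq_zero h
      omega
    obtain ⟨i0, hi0, hj0⟩ := hex
    have hi0' : 1 ≤ i0 := (Finset.mem_Icc.1 hi0).1
    obtain ⟨k0, hk0⟩ : ∃ k0, j i0 = k0 + 1 := ⟨j i0 - 1, by omega⟩
    set j' : ℕ → ℕ := Function.update j i0 k0 with hj'def
    have hj'i0 : j' i0 = k0 := Function.update_self i0 k0 j
    have hj'ne : ∀ i, i ≠ i0 → j' i = j i := fun i hi => Function.update_of_ne hi _ _
    have hsum' : ∑ i ∈ Finset.Icc 1 r, j' i = N := by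
      have h1 : ∑ i ∈ Finset.Icc 1 r, j i = j i0 + ∑ i ∈ (Finset.Icc 1 r).erase i0, j i :=
        (Finset.add_sum_erase _ j hi0).symm
      have h2 : ∑ i ∈ Finset.Icc 1 r, j' i = j' i0 + ∑ i ∈ (Finset.Icc 1 r).erase i0, j' i :=
        (Finset.add_sum_erase _ j' hi0).symm
      have h3 : ∑ i ∈ (Finset.Icc 1 r).erase i0, j' i = ∑ i ∈ (Finset.Icc 1 r).erase i0, j i :=
        Finset.sum_congr rfl (fun i hi => hj'ne i (Finset.ne_of_mem_erase hi))
      omega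
    have hldec : ∑ i ∈ Finset.Icc 1 r, i * j i = i0 + ∑ i ∈ Finset.Icc 1 r, i * j' i := by
      have h1 : ∑ i ∈ Finset.Icc 1 r, i * j i
          = i0 * j i0 + ∑ i ∈ (Finset.Icc 1 r).erase i0, i * j i :=
        (Finset.add_sum_erase _ (fun i => i * j i) hi0).symm
      have h2 : ∑ i ∈ Finset.Icc 1 r, i * j' i
          = i0 * j' i0 + ∑ i ∈ (Finset.Icc 1 r).erase i0, i * j' i :=
        (Finset.add_sum_erase _ (fun i => i * j' i) hi0).symm
      have h3 : ∑ i ∈ (Finset.Icc 1 r).erase i0, i * j' i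
          = ∑ i ∈ (Finset.Icc 1 r).erase i0, i * j i :=
        Finset.sum_congr rfl (fun i hi => by rw [hj'ne i (Finset.ne_of_mem_erase hi)])
      have h4 : i0 * j i0 = i0 * j' i0 + i0 := by rw [hj'i0, hk0]; ring
      omega
    set H : Multiset ℕ → ℝ := fun μ => θ ^ (Multiset.card μ)
      * (((Multiset.count i0 μ - 1).descFactorial k0 : ℕ) : ℝ)
      * ∏ i ∈ (Finset.Icc 1 r).erase i0, ((Multiset.count i μ).descFactorial (j i) : ℝ) with hH
    have hper : ∀ σ : Perm (Fin n),
        θ ^ (Multiset.card (ftyp σ))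
            * ∏ i ∈ Finset.Icc 1 r, ((Multiset.count i (ftyp σ)).descFactorial (j i) : ℝ)
          = (Multiset.count i0 (ftyp σ) : ℝ) * H (ftyp σ) := by
      intro σ
      rw [← Finset.mul_prod_erase _ _ hi0]
      have hdf : ((Multiset.count i0 (ftyp σ)).descFactorial (j i0) : ℝ)
          = (Multiset.count i0 (ftyp σ) : ℝ)
            * (((Multiset.count i0 (ftyp σ) - 1).descFactorial k0 : ℕ) : ℝ) := by
        rw [hk0, descFactorial_succ']
        push_cast
        ring
      rw [hdf, hH]
      ring
    have hHval : ∀ τ : Perm (Fin (n - i0)), H (ftyp τ + {i0})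
        = θ * (θ ^ (Multiset.card (ftyp τ))
            * ∏ i ∈ Finset.Icc 1 r, ((Multiset.count i (ftyp τ)).descFactorial (j' i) : ℝ)) := by
      intro τ
      rw [hH]
      simp only
      rw [← Finset.mul_prod_erase _ (fun i => ((Multiset.count i (ftyp τ)).descFactorial (j' i) : ℝ)) hi0]
      have hc1 : Multiset.count i0 (ftyp τ + {i0}) - 1 = Multiset.count i0 (ftyp τ) := by
        rw [Multiset.count_add, Multiset.count_singleton_self]
        omega
      have hc2 : ∏ i ∈ (Finset.Icc 1 r).erase i0,
            ((Multiset.count i (ftyp τ + {i0})).descFactorial (j i) : ℝ)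
          = ∏ i ∈ (Finset.Icc 1 r).erase i0,
            ((Multiset.count i (ftyp τ)).descFactorial (j' i) : ℝ) := by
        apply Finset.prod_congr rfl
        intro i hi
        have hne := Finset.ne_of_mem_erase hi
        rw [Multiset.count_add, Multiset.count_singleton, if_neg hne, Nat.add_zero,
          hj'ne i hne]
      rw [hc1, hc2, Multiset.card_add, Multiset.card_singleton, hj'i0, pow_succ]
      ring
    rw [Finset.sum_congr rfl (fun σ _ => hper σ), deletion H hi0' n,
      Finset.sum_congr rfl (fun τ _ => hHval τ), ← Finset.mul_sum,
      ihN (n - i0) r j' hsum', hldec]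
    -- numeric wrap-up
    have hi0ne : (i0 : ℝ) ≠ 0 := Nat.cast_ne_zero.2 (by omega)
    set l' := ∑ i ∈ Finset.Icc 1 r, i * j' i with hl'
    have hdfsplit : (n.descFactorial (i0 + l') : ℝ)
        = ((n - i0).descFactorial l' : ℝ) * ((i0 : ℝ) * (((i0-1).factorial : ℝ) * (n.choose i0 : ℝ))) := by
      have h1 := Nat.descFactorial_mul_descFactorial (k := i0) (m := i0 + l') (n := n) (by omega)
      rw [Nat.add_sub_cancel_left] at h1
      have h2 : n.descFactorial i0 = i0 * ((i0-1).factorial * n.choose i0) := by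
        rw [Nat.descFactorial_eq_factorial_mul_choose, ← Nat.mul_factorial_pred (by omega),
          Nat.mul_assoc]
      rw [← h1, h2]
      push_cast
      ring
    have hsub : n - (i0 + l') = n - i0 - l' := by omega
    have hpsplit : ∏ i ∈ Finset.Icc 1 r, (θ / i) ^ (j i)
        = (θ / i0) * ((θ / i0) ^ k0 * ∏ i ∈ (Finset.Icc 1 r).erase i0, (θ / i) ^ (j i)) := by
      rw [← Finset.mul_prod_erase _ _ hi0, hk0, pow_succ]
      ring
    have hp'split : ∏ i ∈ Finset.Icc 1 r, (θ / i) ^ (j' i)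
        = (θ / i0) ^ k0 * ∏ i ∈ (Finset.Icc 1 r).erase i0, (θ / i) ^ (j i) := by
      rw [← Finset.mul_prod_erase _ _ hi0, hj'i0]
      congr 1
      exact Finset.prod_congr rfl (fun i hi => by rw [hj'ne i (Finset.ne_of_mem_erase hi)])
    rw [hdfsplit, hsub, hpsplit, hp'split]
    have hcancel : (i0 : ℝ) * (θ / i0) = θ := by field_simp
    calc (n.choose i0 : ℝ) * ((i0-1).factorial : ℝ)
          * (θ * (((n - i0).descFactorial l' : ℝ) * risingFact θ (n - i0 - l')
            * ((θ / i0) ^ k0 * ∏ i ∈ (Finset.Icc 1 r).erase i0, (θ / i) ^ (j i))))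
        = ((i0:ℝ) * (θ / i0)) * ((n.choose i0 : ℝ) * ((i0-1).factorial : ℝ)
            * (((n - i0).descFactorial l' : ℝ) * risingFact θ (n - i0 - l')
            * ((θ / i0) ^ k0 * ∏ i ∈ (Finset.Icc 1 r).erase i0, (θ / i) ^ (j i)))) := by
          rw [hcancel]; ring
      _ = ((n - i0).descFactorial l' : ℝ)
            * ((i0 : ℝ) * (((i0-1).factorial : ℝ) * (n.choose i0 : ℝ)))
            * risingFact θ (n - i0 - l')
            * ((θ / i0) * ((θ / i0) ^ k0 * ∏ i ∈ (Finset.Icc 1 r).erase i0, (θ / i) ^ (j i))) := by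
          ring

end Aux

/-- Watterson's formula for the Ewens measure. -/
theorem watterson_formula (θ : ℝ) (hθ : 0 < θ) (n r : ℕ) (hr1 : 1 ≤ r) (hrn : r ≤ n)
    (j : ℕ → ℕ) (l : ℕ) (hl : l = ∑ i ∈ Finset.Icc 1 r, i * j i) :
    ewensE θ n (fun σ => ∏ i ∈ Finset.Icc 1 r, (Nat.descFactorial (cycCount σ i) (j i) : ℝ)) =
      (if l ≤ n then psiRF θ n (n - l) else 0) * ∏ i ∈ Finset.Icc 1 r, (θ / i) ^ (j i) := by
  unfold ewensE
  have hbridge : ∀ σ : Equiv.Perm (Fin n), ∀ i ∈ Finset.Icc 1 r,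
      cycCount σ i = Multiset.count i (ftyp σ) := by
    intro σ i hi
    have h1 : 1 ≤ i := (Finset.mem_Icc.1 hi).1
    by_cases hone : i = 1
    · subst hone
      rw [cycCount, if_pos rfl, ftyp_count_one, Fintype.card_fin]
    · rw [cycCount, if_neg hone, ftyp_count_of_two_le (by omega)]
  have hnum : ∀ σ : Equiv.Perm (Fin n), numCyc σ = Multiset.card (ftyp σ) := by
    intro σ
    rw [numCyc, ftyp_card, Fintype.card_fin]
  have hmain := main_calc θ (∑ i ∈ Finset.Icc 1 r, j i) n r j rfl
  rw [← hl] at hmain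
  have hnumer : ∑ σ : Equiv.Perm (Fin n),
        θ ^ numCyc σ * ∏ i ∈ Finset.Icc 1 r, ((cycCount σ i).descFactorial (j i) : ℝ)
      = (n.descFactorial l : ℝ) * risingFact θ (n - l)
          * ∏ i ∈ Finset.Icc 1 r, (θ / i) ^ (j i) := by
    rw [← hmain]
    apply Finset.sum_congr rfl
    intro σ _
    rw [hnum σ]
    congr 1
    exact Finset.prod_congr rfl (fun i hi => by rw [hbridge σ i hi])
  rw [hnumer]
  have hR : risingFact θ n ≠ 0 := ne_of_gt (risingFact_pos hθ n)
  by_cases hln : l ≤ n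
  · rw [if_pos hln, psiRF]
    have hne1 : ((n-l).factorial : ℝ) ≠ 0 := Nat.cast_ne_zero.2 (Nat.factorial_ne_zero _)
    have hfac : ((n - l).factorial : ℝ) * (n.descFactorial l : ℝ) = (n.factorial : ℝ) := by
      exact_mod_cast congrArg (fun m : ℕ => (m : ℝ)) (Nat.factorial_mul_descFactorial hln)
    have hdf : (n.descFactorial l : ℝ) = (n.factorial : ℝ) / ((n-l).factorial : ℝ) := by
      rw [eq_div_iff hne1]
      linear_combination hfac
    rw [hdf]
    field_simp
  · rw [if_neg hln]
    rw [Nat.descFactorial_eq_zero_iff_lt.2 (by omega)]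
    simp
end

section
/- Let θ ≥ 1, J_n ⊂ {1,...,n}, and define υ_n(l) = θ^l Σ_{j_1+...+j_l < n, all j_i ∈ J_n} (1/(j_1···j_l)) (1 - (j_1+...+j_l)/n)^{θ-1}. Then υ_n(l) ≤ υ_n(1)^l for every n, l ∈ N. -/
open Finset Real

private lemma weierstrass_aux {ι : Type*} (s : Finset ι) (f : ι → ℝ)
    (h0 : ∀ i ∈ s, 0 ≤ f i) (h1 : ∀ i ∈ s, f i ≤ 1) :
    1 - ∑ i ∈ s, f i ≤ ∏ i ∈ s, (1 - f i) := by
  induction s using Finset.cons_induction with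
  | empty => simp
  | cons a s ha ih =>
    rw [Finset.sum_cons, Finset.prod_cons]
    have hfa0 : 0 ≤ f a := h0 a (Finset.mem_cons_self a s)
    have hfa1 : f a ≤ 1 := h1 a (Finset.mem_cons_self a s)
    have hs0 : ∀ i ∈ s, 0 ≤ f i := fun i hi => h0 i (Finset.mem_cons.2 (Or.inr hi))
    have hsum0 : 0 ≤ ∑ i ∈ s, f i := Finset.sum_nonneg hs0
    have ih' := ih hs0 (fun i hi => h1 i (Finset.mem_cons.2 (Or.inr hi)))
    calc 1 - (f a + ∑ i ∈ s, f i)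
        ≤ (1 - f a) * (1 - ∑ i ∈ s, f i) := by nlinarith
      _ ≤ (1 - f a) * ∏ i ∈ s, (1 - f i) :=
          mul_le_mul_of_nonneg_left ih' (by linarith)

/-- `υ_n(l) = θ^l Σ_{j_1+⋯+j_l < n, j_i ∈ J} (1/(j_1⋯j_l)) (1 - (j_1+⋯+j_l)/n)^{θ-1}`. -/
noncomputable def upsilon (θ : ℝ) (n : ℕ) (J : Finset ℕ) (l : ℕ) : ℝ :=
  θ ^ l * ∑ j ∈ (Fintype.piFinset fun _ : Fin l => J).filter (fun j => ∑ i, j i < n),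
    (∏ i, (j i : ℝ))⁻¹ * (1 - (∑ i, j i : ℝ) / n) ^ (θ - 1)

theorem upsilon_le_pow (θ : ℝ) (hθ : 1 ≤ θ) (n : ℕ) (J : Finset ℕ)
    (hJ : J ⊆ Finset.Icc 1 n) (l : ℕ) (hl : 1 ≤ l) :
    upsilon θ n J l ≤ (upsilon θ n J 1) ^ l := by
  rcases Finset.eq_empty_or_nonempty J with hJe | hJne
  · subst hJe
    have hpi : (Fintype.piFinset fun _ : Fin l => (∅ : Finset ℕ)) = ∅ := by
      ext j; simp [Fintype.mem_piFinset]
      exact ⟨⟨0, hl⟩⟩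
    have hpi1 : (Fintype.piFinset fun _ : Fin 1 => (∅ : Finset ℕ)) = ∅ := by
      ext j; simp [Fintype.mem_piFinset]
    simp [upsilon, hpi, hpi1, zero_pow (by omega : l ≠ 0)]
  have hn : 0 < n := by
    obtain ⟨j, hj⟩ := hJne
    have := Finset.mem_Icc.1 (hJ hj); omega
  have hθ0 : (0:ℝ) < θ := lt_of_lt_of_le one_pos hθ
  set J' := J.filter (· < n) with hJ'def
  set g : ℕ → ℝ := fun j => ((j:ℝ))⁻¹ * (1 - (j:ℝ)/n) ^ (θ-1) with hg
  have hg0 : ∀ j ∈ J, 0 ≤ g j := by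
    intro j hj
    have hjn : (j:ℝ) ≤ n := by exact_mod_cast (Finset.mem_Icc.1 (hJ hj)).2
    have : (0:ℝ) ≤ 1 - (j:ℝ)/n := by
      rw [sub_nonneg, div_le_one (by positivity)]; exact hjn
    exact mul_nonneg (by positivity) (Real.rpow_nonneg this _)
  -- υ(1) = θ * ∑_{j ∈ J'} g j
  have h1 : upsilon θ n J 1 = θ * ∑ j ∈ J', g j := by
    unfold upsilon
    rw [pow_one]
    congr 1
    refine Finset.sum_bij' (fun j _ => j 0) (fun k _ => fun _ => k) ?_ ?_ ?_ ?_ ?_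
    · intro j hj
      simp only [Finset.mem_filter, Fintype.mem_piFinset] at hj
      simp only [hJ'def, Finset.mem_filter]
      exact ⟨hj.1 0, by simpa [Fin.sum_univ_one] using hj.2⟩
    · intro k hk
      simp only [hJ'def, Finset.mem_filter] at hk
      simp only [Finset.mem_filter, Fintype.mem_piFinset]
      exact ⟨fun _ => hk.1, by simpa [Fin.sum_univ_one] using hk.2⟩
    · intro j hj
      funext i
      have : i = 0 := Subsingleton.elim _ _
      rw [this]
    · intro k hk; rfl
    · intro j hj
      simp [hg, Fin.sum_univ_one, Fin.prod_univ_one]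
  -- key term bound
  set A := (Fintype.piFinset fun _ : Fin l => J).filter (fun j => ∑ i, j i < n) with hA
  have hterm : ∀ j ∈ A, (∏ i, (j i : ℝ))⁻¹ * (1 - (∑ i, j i : ℝ) / n) ^ (θ - 1)
      ≤ ∏ i, g (j i) := by
    intro j hj
    simp only [hA, Finset.mem_filter, Fintype.mem_piFinset] at hj
    obtain ⟨hjJ, hjsum⟩ := hj
    have hji : ∀ i, 1 ≤ j i ∧ j i ≤ n := fun i => Finset.mem_Icc.1 (hJ (hjJ i))
    have hx0 : ∀ i : Fin l, (0:ℝ) ≤ (j i : ℝ)/n := fun i => by positivity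
    have hx1 : ∀ i : Fin l, (j i : ℝ)/n ≤ 1 := fun i => by
      rw [div_le_one (by positivity)]
      exact_mod_cast (hji i).2
    have hsumlt : (∑ i, (j i : ℝ)) / n < 1 := by
      rw [div_lt_one (by positivity)]
      exact_mod_cast hjsum
    have hW : 1 - (∑ i, (j i : ℝ)) / n ≤ ∏ i, (1 - (j i : ℝ)/n) := by
      have := weierstrass_aux Finset.univ (fun i : Fin l => (j i : ℝ)/n)
        (fun i _ => hx0 i) (fun i _ => hx1 i)
      simpa [Finset.sum_div] using this
    have hrpow : (1 - (∑ i, j i : ℝ) / n) ^ (θ - 1)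
        ≤ (∏ i, (1 - (j i : ℝ)/n)) ^ (θ - 1) := by
      refine Real.rpow_le_rpow ?_ ?_ (by linarith)
      · linarith
      · push_cast at hW ⊢; exact hW
    have hprodrpow : (∏ i, (1 - (j i : ℝ)/n)) ^ (θ - 1)
        = ∏ i, (1 - (j i : ℝ)/n) ^ (θ - 1) :=
      (Real.finset_prod_rpow Finset.univ _ (fun i _ => by
        have := hx1 i; linarith) _).symm
    calc (∏ i, (j i : ℝ))⁻¹ * (1 - (∑ i, j i : ℝ) / n) ^ (θ - 1)
        ≤ (∏ i, (j i : ℝ))⁻¹ * ((∏ i, (1 - (j i : ℝ)/n)) ^ (θ - 1)) := by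
          refine mul_le_mul_of_nonneg_left hrpow ?_
          refine inv_nonneg.2 (Finset.prod_nonneg fun i _ => by positivity)
      _ = ∏ i, g (j i) := by
          rw [hprodrpow, ← Finset.prod_inv_distrib, ← Finset.prod_mul_distrib]
  -- sum bound
  have hsub : A ⊆ Fintype.piFinset (fun _ : Fin l => J') := by
    intro j hj
    simp only [hA, Finset.mem_filter, Fintype.mem_piFinset] at hj
    obtain ⟨hjJ, hjsum⟩ := hj
    rw [Fintype.mem_piFinset]
    intro i
    simp only [hJ'def, Finset.mem_filter]
    refine ⟨hjJ i, lt_of_le_of_lt ?_ hjsum⟩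
    exact Finset.single_le_sum (f := fun i => j i) (fun _ _ => Nat.zero_le _)
      (Finset.mem_univ i)
  have hsum : ∑ j ∈ A, (∏ i, (j i : ℝ))⁻¹ * (1 - (∑ i, j i : ℝ) / n) ^ (θ - 1)
      ≤ (∑ j ∈ J', g j) ^ l := by
    calc ∑ j ∈ A, (∏ i, (j i : ℝ))⁻¹ * (1 - (∑ i, j i : ℝ) / n) ^ (θ - 1)
        ≤ ∑ j ∈ A, ∏ i, g (j i) := Finset.sum_le_sum hterm
      _ ≤ ∑ j ∈ Fintype.piFinset (fun _ : Fin l => J'), ∏ i, g (j i) := by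
          refine Finset.sum_le_sum_of_subset_of_nonneg hsub ?_
          intro j hj _
          rw [Fintype.mem_piFinset] at hj
          exact Finset.prod_nonneg fun i _ =>
            hg0 _ (Finset.mem_filter.1 (hj i)).1
      _ = ∏ _i : Fin l, ∑ j ∈ J', g j := (Finset.prod_univ_sum _ _).symm
      _ = (∑ j ∈ J', g j) ^ l := by
          rw [Finset.prod_const, Finset.card_univ, Fintype.card_fin]
  have hTnn : 0 ≤ ∑ j ∈ J', g j :=
    Finset.sum_nonneg fun j hj => hg0 j (Finset.mem_filter.1 hj).1
  rw [h1, mul_pow]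
  calc upsilon θ n J l
      = θ ^ l * ∑ j ∈ A, (∏ i, (j i : ℝ))⁻¹ * (1 - (∑ i, j i : ℝ) / n) ^ (θ - 1) := rfl
    _ ≤ θ ^ l * (∑ j ∈ J', g j) ^ l :=
        mul_le_mul_of_nonneg_left hsum (by positivity)
end

section
/- Let 0 < θ < 1 and J_n ⊂ {1,...,n}. There exists a constant C > 0 depending only on θ such that υ_n(l) ≤ C^l (υ_n(1) + 1)^l for every l ∈ N, where υ_n(l) = θ^l Σ_{j_1+...+j_l < n, all j_i ∈ J_n} (1/(j_1···j_l)) (1 - (j_1+...+j_l)/n)^{θ-1}. -/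
open Finset Real

/-- Discrete Bernoulli step : `θ x^{θ-1} ≤ x^θ - (x-1)^θ` for `x ≥ 1`. -/
lemma bernoulli_step {θ : ℝ} (hθ0 : 0 < θ) (hθ1 : θ ≤ 1) {x : ℝ} (hx : 1 ≤ x) :
    θ * x ^ (θ - 1) ≤ x ^ θ - (x - 1) ^ θ := by
  have hx0 : (0:ℝ) < x := lt_of_lt_of_le one_pos hx
  have hinv : (1:ℝ)/x ≤ 1 := by rw [div_le_one hx0]; exact hx
  have hinv0 : (0:ℝ) ≤ 1/x := by positivity
  have hs : (-1:ℝ) ≤ -(1/x) := by linarith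
  have hb : (1 + -(1/x)) ^ θ ≤ 1 + θ * -(1/x) :=
    rpow_one_add_le_one_add_mul_self hs hθ0.le hθ1
  have h1 : (1 + -(1/x)) = 1 - 1/x := by ring
  rw [h1] at hb
  have hxθ : (0:ℝ) < x ^ θ := Real.rpow_pos_of_pos hx0 θ
  have h2 : (x - 1) ^ θ = (1 - 1/x) ^ θ * x ^ θ := by
    rw [← Real.mul_rpow (by linarith) hx0.le]
    congr 1
    field_simp
  have h3 : x ^ θ * (θ * (1/x)) = θ * x ^ (θ - 1) := by
    rw [Real.rpow_sub hx0, Real.rpow_one]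
    field_simp
  have h4 : (1 - 1/x) ^ θ * x ^ θ ≤ (1 + θ * -(1/x)) * x ^ θ :=
    mul_le_mul_of_nonneg_right hb hxθ.le
  rw [h2]
  nlinarith [h4, h3]

/-- `Σ_{k=1}^M k^{θ-1} ≤ M^θ / θ`. -/
lemma sum_rpow_le {θ : ℝ} (hθ0 : 0 < θ) (hθ1 : θ ≤ 1) (M : ℕ) :
    ∑ k ∈ Icc 1 M, (k : ℝ) ^ (θ - 1) ≤ (M : ℝ) ^ θ / θ := by
  induction M with
  | zero => simp [Real.zero_rpow hθ0.ne']
  | succ M ih =>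
    rw [Finset.sum_Icc_succ_top (by omega)]
    have hx : (1:ℝ) ≤ (M:ℝ) + 1 := by
      have : (0:ℝ) ≤ (M:ℝ) := Nat.cast_nonneg M
      linarith
    have hb := bernoulli_step hθ0 hθ1 hx
    have hcast : ((M:ℝ) + 1) - 1 = (M:ℝ) := by ring
    rw [hcast] at hb
    have hM1 : ((M+1:ℕ):ℝ) = (M:ℝ) + 1 := by push_cast; ring
    rw [hM1]
    rw [le_div_iff₀ hθ0] at ih ⊢
    nlinarith [ih, hb]

lemma upsilon_nonneg {θ : ℝ} (hθ0 : 0 < θ) (n : ℕ) (J : Finset ℕ) (l : ℕ) :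
    0 ≤ upsilon θ n J l := by
  unfold upsilon
  apply mul_nonneg (by positivity)
  apply Finset.sum_nonneg
  intro j hj
  simp only [Finset.mem_filter] at hj
  apply mul_nonneg (by positivity)
  apply Real.rpow_nonneg
  have hn : 0 < n := lt_of_le_of_lt (Nat.zero_le _) hj.2
  have hle : (∑ i, (j i : ℝ)) ≤ (n : ℝ) := by exact_mod_cast hj.2.le
  have hn' : (0:ℝ) < n := by exact_mod_cast hn
  have : (∑ i, (j i : ℝ)) / n ≤ 1 := by
    rw [div_le_one hn']
    exact hle
  linarith

/-- unfolding of `upsilon` at `l = 1`. -/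
lemma upsilon_one_eq (θ : ℝ) (m : ℕ) (J : Finset ℕ) :
    upsilon θ m J 1 =
      θ * ∑ a ∈ J.filter (· < m), (a : ℝ)⁻¹ * (1 - (a : ℝ) / m) ^ (θ - 1) := by
  unfold upsilon
  rw [pow_one]
  congr 1
  apply Finset.sum_nbij' (i := fun j => j 0) (j := fun a => fun _ => a)
  · intro j hj
    simp only [Finset.mem_filter, Fintype.mem_piFinset] at hj ⊢
    refine ⟨hj.1 0, ?_⟩
    have := hj.2
    simpa [Fin.sum_univ_one] using this
  · intro a ha
    simp only [Finset.mem_filter, Fintype.mem_piFinset] at ha ⊢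
    exact ⟨fun _ => ha.1, by simpa [Fin.sum_univ_one] using ha.2⟩
  · intro j _
    funext i
    exact congrArg j (Subsingleton.elim 0 i)
  · intro a _
    rfl
  · intro j _
    simp [Fin.sum_univ_one, Fin.prod_univ_one]

/-- Recursion: peel off the first coordinate. -/
lemma upsilon_succ (θ : ℝ) (m : ℕ) (J : Finset ℕ) (l : ℕ) :
    upsilon θ m J (l + 1) =
      θ * ∑ a ∈ J.filter (· < m),
        (a : ℝ)⁻¹ * (1 - (a : ℝ) / m) ^ (θ - 1) * upsilon θ (m - a) J l := by
  unfold upsilon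
  have key :
      ∑ j ∈ (Fintype.piFinset fun _ : Fin (l+1) => J).filter (fun j => ∑ i, j i < m),
        (∏ i, (j i : ℝ))⁻¹ * (1 - (∑ i, j i : ℝ) / m) ^ (θ - 1)
      = ∑ a ∈ J.filter (· < m),
          ∑ g ∈ (Fintype.piFinset fun _ : Fin l => J).filter (fun g => ∑ i, g i < m - a),
            (a : ℝ)⁻¹ * (1 - (a : ℝ) / m) ^ (θ - 1) *
              ((∏ i, (g i : ℝ))⁻¹ * (1 - (∑ i, g i : ℝ) / (m - a : ℕ)) ^ (θ - 1)) := by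
    rw [Finset.sum_sigma']
    apply Finset.sum_nbij' (i := fun j => (⟨j 0, Fin.tail j⟩ : Σ _ : ℕ, (Fin l → ℕ)))
      (j := fun x => Fin.cons x.1 x.2)
    · intro j hj
      simp only [Finset.mem_filter, Fintype.mem_piFinset, Finset.mem_sigma] at hj ⊢
      have hsum : ∑ i, j i = j 0 + ∑ i : Fin l, Fin.tail j i := by
        rw [Fin.sum_univ_succ]; rfl
      have hj0 : j 0 ≤ ∑ i, j i :=
        Finset.single_le_sum (f := j) (fun i _ => Nat.zero_le _) (Finset.mem_univ 0)
      refine ⟨⟨hj.1 0, by omega⟩, fun i => hj.1 i.succ, by omega⟩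
    · intro x hx
      simp only [Finset.mem_filter, Fintype.mem_piFinset, Finset.mem_sigma] at hx ⊢
      obtain ⟨⟨haJ, ham⟩, hgJ, hgs⟩ := hx
      constructor
      · intro i
        refine Fin.cases ?_ ?_ i
        · simpa using haJ
        · intro k; simpa using hgJ k
      · rw [Fin.sum_univ_succ]
        simp only [Fin.cons_zero, Fin.cons_succ]
        omega
    · intro j _
      exact Fin.cons_self_tail j
    · intro x _
      simp [Fin.tail_cons]
    · intro j hj
      simp only [Finset.mem_filter, Fintype.mem_piFinset] at hj
      have hj0 : j 0 ≤ ∑ i, j i :=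
        Finset.single_le_sum (f := j) (fun i _ => Nat.zero_le _) (Finset.mem_univ 0)
      have hsumn : ∑ i, j i = j 0 + ∑ i : Fin l, Fin.tail j i := by
        rw [Fin.sum_univ_succ]; rfl
      have ham : j 0 < m := by omega
      have hs : j 0 + ∑ i : Fin l, Fin.tail j i < m := by omega
      have hm0 : (0:ℝ) < m := by
        exact_mod_cast lt_of_le_of_lt (Nat.zero_le (j 0)) ham
      have hma : ((m - j 0 : ℕ) : ℝ) = (m:ℝ) - (j 0 : ℝ) :=
        Nat.cast_sub ham.le
      have hamr : ((j 0 : ℕ) : ℝ) < (m:ℝ) := by exact_mod_cast ham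
      have hmapos : (0:ℝ) < (m:ℝ) - (j 0 : ℝ) := by linarith
      have hsr : (j 0 : ℝ) + (∑ i : Fin l, (Fin.tail j i : ℝ)) ≤ (m:ℝ) := by
        have h := hs.le
        exact_mod_cast h
      have hsum' : (∑ i, (j i : ℝ)) = (j 0 : ℝ) + ∑ i : Fin l, (Fin.tail j i : ℝ) := by
        rw [Fin.sum_univ_succ]; rfl
      have hprod : (∏ i, (j i : ℝ)) = (j 0 : ℝ) * ∏ i : Fin l, (Fin.tail j i : ℝ) := by
        rw [Fin.prod_univ_succ]; rfl
      rw [hsum', hprod]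
      have hbase : 1 - ((j 0 : ℝ) + ∑ i : Fin l, (Fin.tail j i : ℝ)) / m
          = (1 - (j 0 : ℝ)/m) *
            (1 - (∑ i : Fin l, (Fin.tail j i : ℝ)) / ((m:ℝ) - (j 0 : ℝ))) := by
        field_simp
        ring
      have h1 : (0:ℝ) ≤ 1 - (j 0 : ℝ)/m := by
        rw [sub_nonneg, div_le_one hm0]
        linarith
      have h2 : (0:ℝ) ≤ 1 - (∑ i : Fin l, (Fin.tail j i : ℝ)) / ((m:ℝ) - (j 0 : ℝ)) := by
        rw [sub_nonneg, div_le_one hmapos]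
        linarith
      rw [hbase, Real.mul_rpow h1 h2, hma, mul_inv]
      ring
  rw [key]
  simp only [Finset.mul_sum]
  apply Finset.sum_congr rfl
  intro a _
  apply Finset.sum_congr rfl
  intro g _
  ring

/-- Reindexing: `Σ_{a=1}^{m-1} (m-a)^{θ-1} = Σ_{k=1}^{m-1} k^{θ-1}` -/
lemma sum_sub_reindex (θ : ℝ) (m : ℕ) :
    ∑ a ∈ Icc 1 (m-1), ((m:ℝ) - (a:ℝ)) ^ (θ - 1)
      = ∑ k ∈ Icc 1 (m-1), (k:ℝ) ^ (θ - 1) := by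
  apply Finset.sum_nbij' (i := fun a => m - a) (j := fun k => m - k)
  · intro a ha; simp only [Finset.mem_Icc] at ha ⊢; omega
  · intro a ha; simp only [Finset.mem_Icc] at ha ⊢; omega
  · intro a ha; simp only [Finset.mem_Icc] at ha; omega
  · intro a ha; simp only [Finset.mem_Icc] at ha; omega
  · intro a ha
    simp only [Finset.mem_Icc] at ha
    congr 1
    have h : a ≤ m := by omega
    rw [Nat.cast_sub h]

/-- Key uniform bound: `υ_m(1) ≤ 2 υ_n(1) + 2` for `m ≤ n`. -/
lemma upsilon_one_le {θ : ℝ} (hθ0 : 0 < θ) (hθ1 : θ < 1) (n : ℕ) (J : Finset ℕ)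
    {m : ℕ} (hm : m ≤ n) :
    upsilon θ m J 1 ≤ 2 * upsilon θ n J 1 + 2 := by
  have hun : 0 ≤ upsilon θ n J 1 := upsilon_nonneg hθ0 n J 1
  rcases Nat.eq_zero_or_pos m with hm0 | hm0
  · subst hm0
    rw [upsilon_one_eq]
    simp only [Nat.not_lt_zero, Finset.filter_false, Finset.sum_empty, mul_zero]
    linarith
  have hn0 : 0 < n := lt_of_lt_of_le hm0 hm
  have hmr : (0:ℝ) < m := by exact_mod_cast hm0
  have hnr : (0:ℝ) < n := by exact_mod_cast hn0
  have hmn : (m:ℝ) ≤ n := by exact_mod_cast hm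
  have hθ1' : θ - 1 ≤ 0 := by linarith
  rw [upsilon_one_eq θ m J, upsilon_one_eq θ n J]
  set A := J.filter (· < m) with hA
  rw [← Finset.sum_filter_add_sum_filter_not A (fun a => 2 * a ≤ m), mul_add]
  -- Part 1 : small `a`
  have part1 : θ * ∑ a ∈ A.filter (fun a => 2 * a ≤ m),
      (a : ℝ)⁻¹ * (1 - (a : ℝ) / m) ^ (θ - 1)
      ≤ 2 * (θ * ∑ a ∈ J.filter (· < n),
      (a : ℝ)⁻¹ * (1 - (a : ℝ) / n) ^ (θ - 1)) := by
    rw [← mul_assoc, mul_comm (2:ℝ) θ, mul_assoc]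
    apply mul_le_mul_of_nonneg_left _ hθ0.le
    have step1 : ∑ a ∈ A.filter (fun a => 2 * a ≤ m),
        (a : ℝ)⁻¹ * (1 - (a : ℝ) / m) ^ (θ - 1)
        ≤ ∑ a ∈ A.filter (fun a => 2 * a ≤ m),
        2 * ((a : ℝ)⁻¹ * (1 - (a : ℝ) / n) ^ (θ - 1)) := by
      apply Finset.sum_le_sum
      intro a ha
      simp only [hA, Finset.mem_filter] at ha
      obtain ⟨⟨haJ, ham⟩, h2a⟩ := ha
      have har : (a:ℝ) < m := by exact_mod_cast ham
      have harn : (a:ℝ) < n := lt_of_lt_of_le har hmn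
      have h2ar : 2*(a:ℝ) ≤ m := by exact_mod_cast h2a
      have haam : (a:ℝ)/m ≤ 1/2 := by
        rw [div_le_div_iff₀ hmr two_pos]
        linarith
      have hc : (1:ℝ)/2 ≤ 1 - (a:ℝ)/m := by linarith
      have hb0 : (0:ℝ) < 1 - (a:ℝ)/n := by
        rw [sub_pos, div_lt_one hnr]; exact harn
      have hb1 : 1 - (a:ℝ)/n ≤ 1 := by
        have : (0:ℝ) ≤ (a:ℝ)/n := by positivity
        linarith
      have e1 : (1 - (a:ℝ)/m) ^ (θ-1) ≤ ((1:ℝ)/2) ^ (θ-1) :=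
        Real.rpow_le_rpow_of_nonpos (by norm_num) hc hθ1'
      have e2 : ((1:ℝ)/2) ^ (θ-1) ≤ 2 := by
        have he : ((1:ℝ)/2) ^ (θ-1) = (2:ℝ) ^ (1-θ) := by
          rw [one_div, Real.inv_rpow (by norm_num : (0:ℝ) ≤ 2),
            ← Real.rpow_neg (by norm_num : (0:ℝ) ≤ 2)]
          congr 1
          ring
        rw [he]
        calc (2:ℝ) ^ (1-θ) ≤ (2:ℝ) ^ (1:ℝ) :=
              Real.rpow_le_rpow_of_exponent_le one_le_two (by linarith)
          _ = 2 := Real.rpow_one 2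
      have e3 : (1:ℝ) ≤ (1 - (a:ℝ)/n) ^ (θ-1) := by
        have h := Real.rpow_le_rpow_of_nonpos hb0 hb1 hθ1'
        simpa [Real.one_rpow] using h
      have hterm : (1 - (a:ℝ)/m) ^ (θ-1) ≤ 2 * (1 - (a:ℝ)/n) ^ (θ-1) := by
        linarith
      have hainv : (0:ℝ) ≤ (a:ℝ)⁻¹ := by positivity
      calc (a : ℝ)⁻¹ * (1 - (a : ℝ) / m) ^ (θ - 1)
          ≤ (a : ℝ)⁻¹ * (2 * (1 - (a : ℝ) / n) ^ (θ - 1)) :=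
            mul_le_mul_of_nonneg_left hterm hainv
        _ = 2 * ((a : ℝ)⁻¹ * (1 - (a : ℝ) / n) ^ (θ - 1)) := by ring
    have step2 : ∑ a ∈ A.filter (fun a => 2 * a ≤ m),
        2 * ((a : ℝ)⁻¹ * (1 - (a : ℝ) / n) ^ (θ - 1))
        ≤ ∑ a ∈ J.filter (· < n),
        2 * ((a : ℝ)⁻¹ * (1 - (a : ℝ) / n) ^ (θ - 1)) := by
      apply Finset.sum_le_sum_of_subset_of_nonneg
      · intro a ha
        simp only [hA, Finset.mem_filter] at ha ⊢
        exact ⟨ha.1.1, lt_of_lt_of_le ha.1.2 hm⟩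
      · intro a ha _
        simp only [Finset.mem_filter] at ha
        have harn : (a:ℝ) < n := by exact_mod_cast ha.2
        have hb0 : (0:ℝ) ≤ 1 - (a:ℝ)/n := by
          rw [sub_nonneg, div_le_one hnr]; linarith
        positivity
    calc ∑ a ∈ A.filter (fun a => 2 * a ≤ m),
          (a : ℝ)⁻¹ * (1 - (a : ℝ) / m) ^ (θ - 1)
        ≤ ∑ a ∈ J.filter (· < n),
          2 * ((a : ℝ)⁻¹ * (1 - (a : ℝ) / n) ^ (θ - 1)) := le_trans step1 step2
      _ = 2 * ∑ a ∈ J.filter (· < n),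
          (a : ℝ)⁻¹ * (1 - (a : ℝ) / n) ^ (θ - 1) := by
          rw [Finset.mul_sum]
  -- Part 2 : large `a`
  have part2 : θ * ∑ a ∈ A.filter (fun a => ¬ 2 * a ≤ m),
      (a : ℝ)⁻¹ * (1 - (a : ℝ) / m) ^ (θ - 1) ≤ 2 := by
    set X : ℝ := (m:ℝ) ^ (1 - θ) with hX
    have hX0 : (0:ℝ) ≤ X := Real.rpow_nonneg hmr.le _
    have hpt : ∀ a ∈ A.filter (fun a => ¬ 2 * a ≤ m),
        (a : ℝ)⁻¹ * (1 - (a : ℝ) / m) ^ (θ - 1)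
          ≤ (2/(m:ℝ)) * (((m:ℝ) - (a:ℝ)) ^ (θ - 1) * X) := by
      intro a ha
      simp only [hA, Finset.mem_filter] at ha
      obtain ⟨⟨haJ, ham⟩, h2a⟩ := ha
      have ha1 : 1 ≤ a := by omega
      have har : (a:ℝ) < m := by exact_mod_cast ham
      have har1 : (1:ℝ) ≤ (a:ℝ) := by exact_mod_cast ha1
      have h2ar : (m:ℝ) < 2*(a:ℝ) := by exact_mod_cast Nat.lt_of_not_le h2a |>.trans_le le_rfl
      have hsub0 : (0:ℝ) ≤ (m:ℝ) - (a:ℝ) := by linarith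
      have hinv : (a:ℝ)⁻¹ ≤ 2/(m:ℝ) := by
        rw [inv_eq_one_div, div_le_div_iff₀ (by linarith) hmr]
        linarith
      have hrw : (1 - (a:ℝ)/m) ^ (θ - 1) = ((m:ℝ) - (a:ℝ)) ^ (θ - 1) * X := by
        have hb : 1 - (a:ℝ)/m = ((m:ℝ) - (a:ℝ)) / m := by field_simp
        rw [hb, Real.div_rpow hsub0 hmr.le, div_eq_mul_inv]
        congr 1
        rw [hX, ← Real.rpow_neg hmr.le]
        congr 1
        ring
      rw [hrw]
      apply mul_le_mul_of_nonneg_right hinv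
      apply mul_nonneg (Real.rpow_nonneg hsub0 _) hX0
    have hsubA : A.filter (fun a => ¬ 2 * a ≤ m) ⊆ Icc 1 (m-1) := by
      intro a ha
      simp only [hA, Finset.mem_filter, Finset.mem_Icc] at ha ⊢
      omega
    have hchain : ∑ a ∈ A.filter (fun a => ¬ 2 * a ≤ m),
        (a : ℝ)⁻¹ * (1 - (a : ℝ) / m) ^ (θ - 1)
        ≤ (2/(m:ℝ)) * X * ((m:ℝ) ^ θ / θ) := by
      calc ∑ a ∈ A.filter (fun a => ¬ 2 * a ≤ m),
            (a : ℝ)⁻¹ * (1 - (a : ℝ) / m) ^ (θ - 1)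
          ≤ ∑ a ∈ A.filter (fun a => ¬ 2 * a ≤ m),
            (2/(m:ℝ)) * (((m:ℝ) - (a:ℝ)) ^ (θ - 1) * X) := Finset.sum_le_sum hpt
        _ = (2/(m:ℝ)) * X * ∑ a ∈ A.filter (fun a => ¬ 2 * a ≤ m),
            ((m:ℝ) - (a:ℝ)) ^ (θ - 1) := by
            rw [Finset.mul_sum]
            apply Finset.sum_congr rfl
            intro a _
            ring
        _ ≤ (2/(m:ℝ)) * X * ∑ a ∈ Icc 1 (m-1), ((m:ℝ) - (a:ℝ)) ^ (θ - 1) := by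
            apply mul_le_mul_of_nonneg_left _ (by positivity)
            apply Finset.sum_le_sum_of_subset_of_nonneg hsubA
            intro i hi _
            simp only [Finset.mem_Icc] at hi
            have : (i:ℝ) ≤ (m:ℝ) - 1 := by
              have : i ≤ m - 1 := hi.2
              have h' : (i:ℝ) ≤ ((m-1:ℕ):ℝ) := by exact_mod_cast this
              have h'' : ((m-1:ℕ):ℝ) = (m:ℝ) - 1 := by
                exact_mod_cast Nat.cast_sub hm0
              linarith [h'.trans_eq h'']
            apply Real.rpow_nonneg
            linarith
        _ = (2/(m:ℝ)) * X * ∑ k ∈ Icc 1 (m-1), (k:ℝ) ^ (θ - 1) := by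
            rw [sum_sub_reindex]
        _ ≤ (2/(m:ℝ)) * X * (((m-1:ℕ):ℝ) ^ θ / θ) := by
            apply mul_le_mul_of_nonneg_left (sum_rpow_le hθ0 hθ1.le _) (by positivity)
        _ ≤ (2/(m:ℝ)) * X * ((m:ℝ) ^ θ / θ) := by
            apply mul_le_mul_of_nonneg_left _ (by positivity)
            have hcast : ((m-1:ℕ):ℝ) ≤ (m:ℝ) := by exact_mod_cast Nat.sub_le m 1
            have hnum : ((m-1:ℕ):ℝ) ^ θ ≤ (m:ℝ) ^ θ :=
              Real.rpow_le_rpow (Nat.cast_nonneg _) hcast hθ0.le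
            exact div_le_div_of_nonneg_right hnum hθ0.le
    have hfin : θ * ((2/(m:ℝ)) * X * ((m:ℝ) ^ θ / θ)) = 2 := by
      have hmm : X * (m:ℝ) ^ θ = (m:ℝ) := by
        rw [hX, ← Real.rpow_add hmr]
        norm_num
      field_simp
      nlinarith [hmm]
    calc θ * ∑ a ∈ A.filter (fun a => ¬ 2 * a ≤ m),
          (a : ℝ)⁻¹ * (1 - (a : ℝ) / m) ^ (θ - 1)
        ≤ θ * ((2/(m:ℝ)) * X * ((m:ℝ) ^ θ / θ)) :=
          mul_le_mul_of_nonneg_left hchain hθ0.le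
      _ = 2 := hfin
  linarith [part1, part2]

theorem upsilon_le_pow_small_theta (θ : ℝ) (hθ0 : 0 < θ) (hθ1 : θ < 1) :
    ∃ C > (0:ℝ), ∀ n : ℕ, ∀ J : Finset ℕ, J ⊆ Finset.Icc 1 n →
      ∀ l : ℕ, 1 ≤ l →
        upsilon θ n J l ≤ C ^ l * (upsilon θ n J 1 + 1) ^ l := by
  refine ⟨2, two_pos, ?_⟩
  intro n J _hJ l hl
  set C := 2 * upsilon θ n J 1 + 2 with hC
  have hun : 0 ≤ upsilon θ n J 1 := upsilon_nonneg hθ0 n J 1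
  have hCpos : 0 < C := by rw [hC]; linarith
  have key : ∀ l, 1 ≤ l → ∀ m, m ≤ n → upsilon θ m J l ≤ C ^ l := by
    intro l hl
    induction l, hl using Nat.le_induction with
    | base =>
      intro m hmn
      rw [pow_one]
      exact upsilon_one_le hθ0 hθ1 n J hmn
    | succ l hl ih =>
      intro m hmn
      rw [upsilon_succ]
      have step : ∑ a ∈ J.filter (· < m),
          (a : ℝ)⁻¹ * (1 - (a : ℝ) / m) ^ (θ - 1) * upsilon θ (m - a) J l
          ≤ ∑ a ∈ J.filter (· < m),
          (a : ℝ)⁻¹ * (1 - (a : ℝ) / m) ^ (θ - 1) * C ^ l := by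
        apply Finset.sum_le_sum
        intro a ha
        simp only [Finset.mem_filter] at ha
        apply mul_le_mul_of_nonneg_left (ih (m - a) (le_trans (Nat.sub_le m a) hmn))
        have ham : a < m := ha.2
        have hm0 : (0:ℝ) < m := by
          exact_mod_cast lt_of_le_of_lt (Nat.zero_le a) ham
        have har : (a:ℝ) < m := by exact_mod_cast ham
        have hb : (0:ℝ) ≤ 1 - (a:ℝ)/m := by
          rw [sub_nonneg, div_le_one hm0]
          linarith
        positivity
      calc θ * ∑ a ∈ J.filter (· < m),
            (a : ℝ)⁻¹ * (1 - (a : ℝ) / m) ^ (θ - 1) * upsilon θ (m - a) J l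
          ≤ θ * ∑ a ∈ J.filter (· < m),
            (a : ℝ)⁻¹ * (1 - (a : ℝ) / m) ^ (θ - 1) * C ^ l :=
            mul_le_mul_of_nonneg_left step hθ0.le
        _ = upsilon θ m J 1 * C ^ l := by
            rw [upsilon_one_eq, ← Finset.sum_mul]; ring
        _ ≤ C * C ^ l := by
            apply mul_le_mul_of_nonneg_right _ (le_of_lt (pow_pos hCpos l))
            exact upsilon_one_le hθ0 hθ1 n J hmn
        _ = C ^ (l + 1) := by rw [pow_succ]; ring
  have hkey := key l hl n le_rfl
  calc upsilon θ n J l ≤ C ^ l := hkey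
    _ = 2 ^ l * (upsilon θ n J 1 + 1) ^ l := by
        rw [← mul_pow]; congr 1; rw [hC]; ring
end

section
/- For θ > 0 and any u ≥ 1 and n ≥ 2, the sum r_{nu} := n^{1-θ} Σ_{j_1,...,j_u ≤ n} 1{j_1+...+j_u = n}/(j_1···j_u) satisfies r_{nu} ≤ c_u (log n)^{u-1}/n^θ for a constant c_u depending only on u. -/
open Finset Real

lemma harm_eq (n : ℕ) : ∑ j ∈ Icc 1 n, ((j:ℝ))⁻¹ = (harmonic n : ℝ) := by
  rw [harmonic, ← Finset.Ico_add_one_right_eq_Icc, Finset.sum_Ico_eq_sum_range]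
  push_cast
  simp [add_comm]

lemma harm_le (n : ℕ) (hn : 2 ≤ n) : ∑ j ∈ Icc 1 n, ((j:ℝ))⁻¹ ≤ 3 * Real.log n := by
  have h1 : (harmonic n : ℝ) ≤ 1 + Real.log n := harmonic_le_one_add_log n
  have h2 : Real.log 2 ≤ Real.log n := by
    apply Real.log_le_log (by norm_num)
    exact_mod_cast hn
  have h3 : (0.6931471803 : ℝ) < Real.log 2 := Real.log_two_gt_d9
  rw [harm_eq]
  linarith

-- key combinatorial bound: the constrained sum is at most u^2/n * H^(u-1)
lemma key_bound (u : ℕ) (hu : 1 ≤ u) (n : ℕ) (hn : 2 ≤ n) :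
    ∑ j ∈ (Fintype.piFinset fun _ : Fin u => Finset.Icc 1 n).filter
        (fun j => ∑ i, j i = n), (∏ i, (j i : ℝ))⁻¹
      ≤ (u:ℝ) * ((u / n) * (∑ x ∈ Icc 1 n, ((x:ℝ))⁻¹) ^ (u - 1)) := by
  classical
  set T := (Fintype.piFinset fun _ : Fin u => Finset.Icc 1 n).filter
      (fun j => ∑ i, j i = n) with hT
  set H : ℝ := ∑ x ∈ Icc 1 n, ((x:ℝ))⁻¹ with hHdef
  have hn0 : (0:ℝ) < n := by positivity
  have hu0 : (0:ℝ) < u := by exact_mod_cast hu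
  -- step 1: each tuple has some big coordinate
  have hbig : ∀ j ∈ T, ∃ i : Fin u, n ≤ u * j i := by
    intro j hj
    rw [hT, mem_filter] at hj
    by_contra hcon
    push_neg at hcon
    have h1 : ∑ i : Fin u, u * j i < ∑ _i : Fin u, n :=
      Finset.sum_lt_sum_of_nonempty (univ_nonempty_iff.2 ⟨⟨0, hu⟩⟩) fun i _ => hcon i
    rw [← Finset.mul_sum, hj.2, Finset.sum_const, Finset.card_univ, Fintype.card_fin,
      smul_eq_mul] at h1
    exact lt_irrefl _ h1
  have hnonneg : ∀ j : Fin u → ℕ, (0:ℝ) ≤ (∏ i, (j i : ℝ))⁻¹ := by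
    intro j; positivity
  -- step 1+2 : split according to a big coordinate
  have step12 : ∑ j ∈ T, (∏ i, (j i : ℝ))⁻¹
      ≤ ∑ i : Fin u, ∑ j ∈ T.filter (fun j => n ≤ u * j i), (∏ k, (j k : ℝ))⁻¹ := by
    have : ∑ j ∈ T, (∏ i, (j i : ℝ))⁻¹
        ≤ ∑ j ∈ T, ∑ i : Fin u, (if n ≤ u * j i then (∏ k, (j k : ℝ))⁻¹ else 0) := by
      apply Finset.sum_le_sum
      intro j hj
      obtain ⟨i₀, hi₀⟩ := hbig j hj
      have := Finset.single_le_sum (f := fun i : Fin u =>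
          (if n ≤ u * j i then (∏ k, (j k : ℝ))⁻¹ else 0))
        (fun i _ => by split_ifs; exacts [hnonneg j, le_rfl]) (Finset.mem_univ i₀)
      simpa [hi₀] using this
    refine this.trans ?_
    rw [Finset.sum_comm]
    apply le_of_eq
    exact Finset.sum_congr rfl fun i _ => (Finset.sum_filter _ _).symm
  refine step12.trans ?_
  -- step 3 : bound each inner sum
  have step3 : ∀ i : Fin u,
      ∑ j ∈ T.filter (fun j => n ≤ u * j i), (∏ k, (j k : ℝ))⁻¹
        ≤ (u / n) * H ^ (u - 1) := by
    intro i
    set Ti := T.filter (fun j => n ≤ u * j i) with hTi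
    set e : (Fin u → ℕ) → (Fin u → ℕ) := fun j => Function.update j i 1 with he
    -- membership facts
    have hmem : ∀ j ∈ Ti, (∀ k, j k ∈ Icc 1 n) ∧ (∑ k, j k = n) ∧ n ≤ u * j i := by
      intro j hj
      rw [hTi, Finset.mem_filter, hT, Finset.mem_filter, Fintype.mem_piFinset] at hj
      exact ⟨hj.1.1, hj.1.2, hj.2⟩
    -- termwise bound
    have hterm : ∀ j ∈ Ti, (∏ k, (j k : ℝ))⁻¹ ≤ (u / n) * (∏ k, (e j k : ℝ))⁻¹ := by
      intro j hj
      obtain ⟨hmem', _, hbigi⟩ := hmem j hj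
      have hji1 : 1 ≤ j i := (Finset.mem_Icc.1 (hmem' i)).1
      have hji0 : (0:ℝ) < j i := by exact_mod_cast hji1
      have hprodsplit : ∏ k, (j k : ℝ) = (j i : ℝ) * ∏ k ∈ univ.erase i, (j k : ℝ) :=
        (Finset.mul_prod_erase univ _ (mem_univ i)).symm
      have heprod : ∏ k, (e j k : ℝ) = ∏ k ∈ univ.erase i, (j k : ℝ) := by
        rw [← Finset.mul_prod_erase univ _ (mem_univ i)]
        simp only [he, Function.update_self, Nat.cast_one, one_mul]
        exact Finset.prod_congr rfl fun k hk =>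
          by rw [Function.update_of_ne (Finset.mem_erase.1 hk).1]
      have hPpos : (0:ℝ) < ∏ k ∈ univ.erase i, (j k : ℝ) := by
        apply Finset.prod_pos
        intro k hk
        have := (Finset.mem_Icc.1 (hmem' k)).1
        exact_mod_cast this
      rw [hprodsplit, heprod, mul_inv]
      apply mul_le_mul_of_nonneg_right _ (by positivity)
      rw [inv_eq_one_div, div_le_div_iff₀ hji0 hn0, one_mul]
      have : (n:ℝ) ≤ (u:ℝ) * (j i : ℝ) := by exact_mod_cast hbigi
      linarith
    calc ∑ j ∈ Ti, (∏ k, (j k : ℝ))⁻¹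
        ≤ ∑ j ∈ Ti, (u / n) * (∏ k, (e j k : ℝ))⁻¹ := Finset.sum_le_sum hterm
      _ = (u / n) * ∑ j ∈ Ti, (∏ k, (e j k : ℝ))⁻¹ := by rw [Finset.mul_sum]
      _ ≤ (u / n) * H ^ (u - 1) := by
          apply mul_le_mul_of_nonneg_left _ (by positivity)
          -- injectivity of e on Ti
          have hinj : Set.InjOn e Ti := by
            intro j hj j' hj' heq
            obtain ⟨_, hs, _⟩ := hmem j hj
            obtain ⟨_, hs', _⟩ := hmem j' hj'
            have hoff : ∀ k, k ≠ i → j k = j' k := by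
              intro k hk
              have h2 : Function.update j i 1 k = Function.update j' i 1 k := congrFun heq k
              rwa [Function.update_of_ne hk, Function.update_of_ne hk] at h2
            have hsum : j i + ∑ k ∈ univ.erase i, j k = j' i + ∑ k ∈ univ.erase i, j' k := by
              rw [Finset.add_sum_erase univ _ (mem_univ i),
                Finset.add_sum_erase univ _ (mem_univ i), hs, hs']
            have : ∑ k ∈ univ.erase i, j k = ∑ k ∈ univ.erase i, j' k :=
              Finset.sum_congr rfl fun k hk => hoff k (Finset.mem_erase.1 hk).1
            rw [this] at hsum
            have hii : j i = j' i := by omega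
            funext k
            by_cases hk : k = i
            · rw [hk]; exact hii
            · exact hoff k hk
          have himg : ∑ j' ∈ Ti.image e, (∏ k, ((j' k : ℕ):ℝ))⁻¹
              = ∑ j ∈ Ti, (∏ k, ((e j k : ℕ):ℝ))⁻¹ :=
            Finset.sum_image (fun x hx y hy hxy => hinj hx hy hxy)
          rw [← himg]
          -- image is inside the restricted pi set
          set P := Fintype.piFinset (fun k : Fin u =>
            if k = i then ({1} : Finset ℕ) else Icc 1 n) with hP
          have hsub : Ti.image e ⊆ P := by
            intro j' hj'
            obtain ⟨j, hj, rfl⟩ := Finset.mem_image.1 hj'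
            rw [hP, Fintype.mem_piFinset]
            intro k
            by_cases hk : k = i
            · subst hk; simp [he]
            · rw [if_neg hk]
              simp only [he, Function.update_of_ne hk]
              exact (hmem j hj).1 k
          refine (Finset.sum_le_sum_of_subset_of_nonneg hsub
            (fun j' _ _ => hnonneg j')).trans ?_
          -- factor the sum over the product set
          have hfact : ∑ j' ∈ P, (∏ k, (j' k : ℝ))⁻¹
              = ∏ k : Fin u, ∑ x ∈ (if k = i then ({1} : Finset ℕ) else Icc 1 n), ((x:ℝ))⁻¹ := by
            rw [Finset.prod_univ_sum]
            exact Finset.sum_congr rfl fun j' _ => by rw [← Finset.prod_inv_distrib]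
          rw [hfact]
          apply le_of_eq
          have : ∀ k : Fin u,
              (∑ x ∈ (if k = i then ({1} : Finset ℕ) else Icc 1 n), ((x:ℝ))⁻¹)
              = if k = i then 1 else H := by
            intro k
            by_cases hk : k = i <;> simp [hk, hHdef]
          rw [Finset.prod_congr rfl fun k _ => this k]
          rw [← Finset.mul_prod_erase univ _ (mem_univ i), if_pos rfl, one_mul]
          rw [Finset.prod_congr rfl (fun k hk => if_neg (Finset.mem_erase.1 hk).1),
            Finset.prod_const, Finset.card_erase_of_mem (mem_univ i), Finset.card_univ,
            Fintype.card_fin]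
  calc ∑ i : Fin u, ∑ j ∈ T.filter (fun j => n ≤ u * j i), (∏ k, (j k : ℝ))⁻¹
      ≤ ∑ _i : Fin u, (u / n : ℝ) * H ^ (u - 1) := Finset.sum_le_sum fun i _ => step3 i
    _ = (u:ℝ) * ((u / n) * H ^ (u - 1)) := by
        rw [Finset.sum_const, Finset.card_univ, Fintype.card_fin, nsmul_eq_mul]

theorem r_nu_bound (u : ℕ) (hu : 1 ≤ u) :
    ∃ c > (0:ℝ), ∀ θ : ℝ, 0 < θ → ∀ n : ℕ, 2 ≤ n →
      (n : ℝ) ^ (1 - θ) *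
        ∑ j ∈ (Fintype.piFinset fun _ : Fin u => Finset.Icc 1 n).filter
            (fun j => ∑ i, j i = n), (∏ i, (j i : ℝ))⁻¹
      ≤ c * (Real.log n) ^ (u - 1) / (n : ℝ) ^ θ := by
  have hu0 : (0:ℝ) < u := by exact_mod_cast hu
  refine ⟨(u:ℝ)^2 * 3^(u-1), by positivity, ?_⟩
  intro θ hθ n hn
  have hn0 : (0:ℝ) < n := by
    have : (2:ℝ) ≤ n := by exact_mod_cast hn
    linarith
  set H : ℝ := ∑ x ∈ Icc 1 n, ((x:ℝ))⁻¹ with hHdef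
  have hHnonneg : 0 ≤ H := by
    rw [hHdef]; positivity
  have hkey := key_bound u hu n hn
  have hlogpos : 0 < Real.log n := by
    apply Real.log_pos
    have : (2:ℝ) ≤ n := by exact_mod_cast hn
    linarith
  have hHle : H ≤ 3 * Real.log n := harm_le n hn
  have hrpow : (n:ℝ) ^ (1 - θ) = n / (n:ℝ) ^ θ := by
    rw [Real.rpow_sub hn0, Real.rpow_one]
  have hrpos : (0:ℝ) < (n:ℝ) ^ θ := Real.rpow_pos_of_pos hn0 θ
  calc (n : ℝ) ^ (1 - θ) *
        ∑ j ∈ (Fintype.piFinset fun _ : Fin u => Finset.Icc 1 n).filter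
            (fun j => ∑ i, j i = n), (∏ i, (j i : ℝ))⁻¹
      ≤ (n : ℝ) ^ (1 - θ) * ((u:ℝ) * ((u / n) * H ^ (u - 1))) := by
        apply mul_le_mul_of_nonneg_left hkey (Real.rpow_nonneg hn0.le _)
    _ = (u:ℝ)^2 * H ^ (u - 1) / (n:ℝ) ^ θ := by
        rw [hrpow]
        field_simp
    _ ≤ (u:ℝ)^2 * (3 * Real.log n) ^ (u - 1) / (n:ℝ) ^ θ := by
        gcongr
    _ = (u:ℝ)^2 * 3^(u-1) * (Real.log n) ^ (u - 1) / (n : ℝ) ^ θ := by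
        rw [mul_pow]; ring
end

section
/- Let θ > 0. For n ≥ 2, Σ_{j ≤ n/2} 1/(j(n-j)) + Σ_{n/2 < j < n} (1/(j(n-j)))·(1 - j/n)^{θ-1} ≤ C (log n)/n^{min(1,θ)} for a constant C depending only on θ. -/
open Finset Real

lemma harm_le_s16 (n : ℕ) : ∑ j ∈ Finset.Icc 1 n, (1:ℝ)/j ≤ 1 + Real.log n := by
  induction n with
  | zero => simp
  | succ n ih =>
    rcases Nat.eq_zero_or_pos n with h0 | hpos
    · subst h0; simp
    · have hn0 : (0:ℝ) < n := by exact_mod_cast hpos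
      have hlog : Real.log n + 1/((n:ℝ)+1) ≤ Real.log ((n:ℝ)+1) := by
        have h1 : (0:ℝ) < (n:ℝ)/((n:ℝ)+1) := by positivity
        have h2 := Real.log_le_sub_one_of_pos h1
        rw [Real.log_div (by positivity) (by positivity)] at h2
        have h3 : (n:ℝ)/((n:ℝ)+1) - 1 = -(1/((n:ℝ)+1)) := by field_simp; ring
        rw [h3] at h2
        linarith
      rw [Finset.sum_Icc_succ_top (by omega : 1 ≤ n + 1)]
      push_cast
      linarith

theorem two_sums_bound (θ : ℝ) (hθ : 0 < θ) :
    ∃ C > (0:ℝ), ∀ n : ℕ, 2 ≤ n →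
      (∑ j ∈ (Finset.Icc 1 n).filter (fun j => 2 * j ≤ n),
          1 / ((j : ℝ) * ((n : ℝ) - j))) +
      (∑ j ∈ (Finset.Icc 1 n).filter (fun j => n < 2 * j ∧ j < n),
          (1 / ((j : ℝ) * ((n : ℝ) - j))) * (1 - (j : ℝ) / n) ^ (θ - 1))
      ≤ C * Real.log n / (n : ℝ) ^ (min 1 θ) := by
  have hlog2 : (0:ℝ) < Real.log 2 := Real.log_pos (by norm_num)
  refine ⟨4 * (1 + 1/Real.log 2), by positivity, ?_⟩
  intro n hn
  have hn0 : (0:ℝ) < n := by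
    have : (2:ℝ) ≤ n := by exact_mod_cast hn
    linarith
  have hn1 : (1:ℝ) ≤ n := by linarith [show (2:ℝ) ≤ n from by exact_mod_cast hn]
  have hlogn : Real.log 2 ≤ Real.log n :=
    Real.log_le_log (by norm_num) (by exact_mod_cast hn)
  set m := min 1 θ with hm
  have hm1 : m ≤ 1 := min_le_left _ _
  have hm0 : 0 < m := lt_min one_pos hθ
  have hpow : (n:ℝ)^(-(1:ℝ)) ≤ (n:ℝ)^(-m) :=
    Real.rpow_le_rpow_of_exponent_le hn1 (by linarith)
  have hone_log : (0:ℝ) ≤ 1 + Real.log n := by linarith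
  -- First sum
  have hS1 : (∑ j ∈ (Finset.Icc 1 n).filter (fun j => 2 * j ≤ n),
      1 / ((j : ℝ) * ((n : ℝ) - j))) ≤ 2/(n:ℝ) * (1 + Real.log n) := by
    have step1 : (∑ j ∈ (Finset.Icc 1 n).filter (fun j => 2 * j ≤ n),
        1 / ((j : ℝ) * ((n : ℝ) - j)))
        ≤ ∑ j ∈ (Finset.Icc 1 n).filter (fun j => 2 * j ≤ n), 2/(n:ℝ) * (1/(j:ℝ)) := by
      apply Finset.sum_le_sum
      intro j hj
      simp only [Finset.mem_filter, Finset.mem_Icc] at hj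
      obtain ⟨⟨hj1, hj2⟩, hj3⟩ := hj
      have hjR : (1:ℝ) ≤ j := by exact_mod_cast hj1
      have h2j : 2*(j:ℝ) ≤ n := by exact_mod_cast hj3
      have key : (n:ℝ)*j/2 ≤ (j:ℝ)*((n:ℝ)-j) := by nlinarith
      have hpos : (0:ℝ) < (n:ℝ)*j/2 := by positivity
      calc 1/((j:ℝ)*((n:ℝ)-j)) ≤ 1/((n:ℝ)*j/2) := one_div_le_one_div_of_le hpos key
        _ = 2/(n:ℝ) * (1/(j:ℝ)) := by
            rw [div_mul_div_comm]
            rw [one_div_div]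
            ring
    have step2 : (∑ j ∈ (Finset.Icc 1 n).filter (fun j => 2 * j ≤ n), 2/(n:ℝ) * (1/(j:ℝ)))
        ≤ ∑ j ∈ Finset.Icc 1 n, 2/(n:ℝ) * (1/(j:ℝ)) := by
      apply Finset.sum_le_sum_of_subset_of_nonneg (Finset.filter_subset _ _)
      intro i _ _
      positivity
    have step3 : (∑ j ∈ Finset.Icc 1 n, 2/(n:ℝ) * (1/(j:ℝ))) ≤ 2/(n:ℝ) * (1 + Real.log n) := by
      rw [← Finset.mul_sum]
      exact mul_le_mul_of_nonneg_left (harm_le_s16 n) (by positivity)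
    linarith
  -- Second sum
  have hS2 : (∑ j ∈ (Finset.Icc 1 n).filter (fun j => n < 2 * j ∧ j < n),
      (1 / ((j : ℝ) * ((n : ℝ) - j))) * (1 - (j : ℝ) / n) ^ (θ - 1))
      ≤ 2 * (n:ℝ)^(-m) * (1 + Real.log n) := by
    set S2 := (Finset.Icc 1 n).filter (fun j => n < 2 * j ∧ j < n) with hS2def
    have step1 : (∑ j ∈ S2, (1 / ((j : ℝ) * ((n : ℝ) - j))) * (1 - (j : ℝ) / n) ^ (θ - 1))
        ≤ ∑ j ∈ S2, 2 * (n:ℝ)^(-m) * (1/((n:ℝ)-j)) := by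
      apply Finset.sum_le_sum
      intro j hj
      simp only [hS2def, Finset.mem_filter, Finset.mem_Icc] at hj
      obtain ⟨⟨hj1, hj2⟩, hj3, hj4⟩ := hj
      have hjR : (1:ℝ) ≤ j := by exact_mod_cast hj1
      have h2j : (n:ℝ) < 2*j := by exact_mod_cast hj3
      have ha1 : (1:ℝ) ≤ (n:ℝ) - j := by
        have : (j:ℝ) + 1 ≤ n := by exact_mod_cast hj4
        linarith
      have ha0 : (0:ℝ) < (n:ℝ) - j := by linarith
      have han : (n:ℝ) - j ≤ n := by linarith
      have hrw : 1 - (j:ℝ)/n = ((n:ℝ)-j)/n := by field_simp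
      rw [hrw, Real.div_rpow ha0.le hn0.le]
      have hb : ((n:ℝ)-j)^(θ-1) ≤ (n:ℝ)^(max (θ-1) 0) := by
        rcases le_total 1 θ with h | h
        · rw [max_eq_left (by linarith)]
          exact Real.rpow_le_rpow ha0.le han (by linarith)
        · rw [max_eq_right (by linarith), Real.rpow_zero]
          exact Real.rpow_le_one_of_one_le_of_nonpos ha1 (by linarith)
      have hj2n : 1/(j:ℝ) ≤ 2/(n:ℝ) := by
        rw [div_le_div_iff₀ (by linarith) hn0]; linarith
      have hkey : (2:ℝ)/n * ((n:ℝ)^(max (θ-1) 0)/(n:ℝ)^(θ-1)) = 2 * (n:ℝ)^(-m) := by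
        rw [div_eq_mul_inv (2:ℝ), ← Real.rpow_neg_one (n:ℝ),
          div_eq_mul_inv ((n:ℝ)^(max (θ-1) 0)), ← Real.rpow_neg hn0.le,
          ← Real.rpow_add hn0, mul_assoc, ← Real.rpow_add hn0]
        congr 1
        rcases le_total 1 θ with h | h
        · rw [max_eq_left (by linarith), hm, min_eq_left h]; ring
        · rw [max_eq_right (by linarith), hm, min_eq_right h]; ring
      calc 1/((j:ℝ)*((n:ℝ)-j)) * (((n:ℝ)-j)^(θ-1)/(n:ℝ)^(θ-1))
          = (1/(j:ℝ)) * ((((n:ℝ)-j)^(θ-1)/(n:ℝ)^(θ-1)) * (1/((n:ℝ)-j))) := by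
            field_simp
        _ ≤ (2/(n:ℝ)) * (((n:ℝ)^(max (θ-1) 0)/(n:ℝ)^(θ-1)) * (1/((n:ℝ)-j))) := by
            apply mul_le_mul hj2n ?_ (by positivity) (by positivity)
            apply mul_le_mul_of_nonneg_right ?_ (by positivity)
            exact div_le_div_of_nonneg_right hb (by positivity)
        _ = 2 * (n:ℝ)^(-m) * (1/((n:ℝ)-j)) := by rw [← mul_assoc, hkey]
    have hre : (∑ j ∈ S2, 1/((n:ℝ)-j)) ≤ 1 + Real.log n := by
      have hinj : ∀ a ∈ S2, ∀ b ∈ S2, n - a = n - b → a = b := by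
        intro a ha b hb hab
        simp only [hS2def, Finset.mem_filter, Finset.mem_Icc] at ha hb
        omega
      have heq : (∑ j ∈ S2, 1/((n:ℝ)-j))
          = ∑ k ∈ S2.image (fun j => n - j), 1/(k:ℝ) := by
        rw [Finset.sum_image hinj]
        apply Finset.sum_congr rfl
        intro j hj
        simp only [hS2def, Finset.mem_filter, Finset.mem_Icc] at hj
        rw [Nat.cast_sub hj.1.2]
      rw [heq]
      refine le_trans (Finset.sum_le_sum_of_subset_of_nonneg ?_ ?_) (harm_le_s16 n)
      · intro k hk
        simp only [Finset.mem_image, hS2def, Finset.mem_filter, Finset.mem_Icc] at hk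
        simp only [Finset.mem_Icc]
        omega
      · intro i _ _
        positivity
    calc (∑ j ∈ S2, (1 / ((j : ℝ) * ((n : ℝ) - j))) * (1 - (j : ℝ) / n) ^ (θ - 1))
        ≤ ∑ j ∈ S2, 2 * (n:ℝ)^(-m) * (1/((n:ℝ)-j)) := step1
      _ = 2 * (n:ℝ)^(-m) * ∑ j ∈ S2, 1/((n:ℝ)-j) := by rw [Finset.mul_sum]
      _ ≤ 2 * (n:ℝ)^(-m) * (1 + Real.log n) := by
          apply mul_le_mul_of_nonneg_left hre (by positivity)
  -- Combine
  have h2n : 2/(n:ℝ) ≤ 2 * (n:ℝ)^(-m) := by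
    rw [Real.rpow_neg_one] at hpow
    calc 2/(n:ℝ) = 2 * (n:ℝ)⁻¹ := by rw [div_eq_mul_inv]
      _ ≤ 2 * (n:ℝ)^(-m) := by linarith
  have htot : (∑ j ∈ (Finset.Icc 1 n).filter (fun j => 2 * j ≤ n),
          1 / ((j : ℝ) * ((n : ℝ) - j))) +
      (∑ j ∈ (Finset.Icc 1 n).filter (fun j => n < 2 * j ∧ j < n),
          (1 / ((j : ℝ) * ((n : ℝ) - j))) * (1 - (j : ℝ) / n) ^ (θ - 1))
      ≤ 4 * (n:ℝ)^(-m) * (1 + Real.log n) := by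
    have h1 : 2/(n:ℝ) * (1 + Real.log n) ≤ 2 * (n:ℝ)^(-m) * (1 + Real.log n) :=
      mul_le_mul_of_nonneg_right h2n hone_log
    linarith
  have hfin : 4 * (n:ℝ)^(-m) * (1 + Real.log n)
      ≤ 4 * (1 + 1/Real.log 2) * Real.log n / (n:ℝ)^m := by
    have hlit : 1 + Real.log n ≤ (1 + 1/Real.log 2) * Real.log n := by
      have : (1:ℝ) ≤ Real.log n / Real.log 2 := by
        rw [le_div_iff₀ hlog2]; linarith
      have h2 : (1/Real.log 2) * Real.log n = Real.log n / Real.log 2 := by ring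
      nlinarith [Real.log_nonneg hn1]
    have hstep : 4 * (n:ℝ)^(-m) * (1 + Real.log n)
        ≤ 4 * (n:ℝ)^(-m) * ((1 + 1/Real.log 2) * Real.log n) := by
      apply mul_le_mul_of_nonneg_left hlit (by positivity)
    calc 4 * (n:ℝ)^(-m) * (1 + Real.log n)
        ≤ 4 * (n:ℝ)^(-m) * ((1 + 1/Real.log 2) * Real.log n) := hstep
      _ = 4 * (1 + 1/Real.log 2) * Real.log n / (n:ℝ)^m := by
          rw [Real.rpow_neg hn0.le, div_eq_mul_inv]; ring
  linarith
end
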